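/- arXiv:1307.1257 — 3 statements merged into one kernel-verified Lean document; each statement's English description precedes it below -/
import Mathlib

section
/- Let D₁ ⊂ D₂ be bounded domains in ℝ^N (N ≥ 2) containing the origin such that the ball B_R(x) of radius R > 0 centered at x is contained in D₂ for every x in the closure of D₁, and assume D₁⁺ is connected. Assume w ∈ C⁰(D₂) ∩ C²(D₂⁺) satisfies Δw = 0 and w ≥ 0 in D₂⁺, and w = 0 on ∂D₂⁺ ∩ {x₁ = 0}. Then there exist constants C > 0 (depending only on N, the diameters of D₁ and D₂, and R) and M ≥ 1 (depending only on N) such that for every z = (z₁, …, z_N) in the closure of D₁⁺ and every x in the closure of D₁⁺ with x₁ ≠ 0: (a) if z₁ > 0 then w(x) ≤ M·C·w(z)/z₁; (b) if z₁ = 0 then w(x) ≤ M·C·(∂w/∂x₁)(z), where (∂w/∂x₁)(z) denotes the one-sided partial derivative of w in the x₁-direction at z, assumed to exist. -/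
open Metric Set
open scoped Pointwise NNReal

/-- The Laplacian: sum of pure second partial derivatives. -/
noncomputable def lapl {N : ℕ} (u : EuclideanSpace ℝ (Fin N) → ℝ)
    (x : EuclideanSpace ℝ (Fin N)) : ℝ :=
  ∑ i : Fin N,
    fderiv ℝ (fun y => fderiv ℝ u y (EuclideanSpace.single i 1)) x (EuclideanSpace.single i 1)

/-- The Lipschitz seminorm `[u]_S = sup { |u x - u y| / |x - y| : x, y ∈ S, x ≠ y }`. -/
noncomputable def lipSemi {N : ℕ} (u : EuclideanSpace ℝ (Fin N) → ℝ)
    (S : Set (EuclideanSpace ℝ (Fin N))) : ℝ :=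
  sSup {r : ℝ | ∃ x ∈ S, ∃ y ∈ S, x ≠ y ∧ r = |u x - u y| / dist x y}

/-- `G` has boundary of class `C^{2,α}`: it is the sublevel set of a `C²` defining function
with `α`-Hölder continuous second derivatives and nonvanishing gradient on the boundary. -/
def C2AlphaBoundary {N : ℕ} (G : Set (EuclideanSpace ℝ (Fin N))) (α : ℝ) : Prop :=
  ∃ (f : EuclideanSpace ℝ (Fin N) → ℝ) (K : ℝ≥0),
    ContDiff ℝ 2 f ∧ HolderWith K α.toNNReal (fderiv ℝ (fderiv ℝ f)) ∧
    G = {x | f x < 0} ∧ frontier G = {x | f x = 0} ∧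
    ∀ x ∈ frontier G, fderiv ℝ f x ≠ 0

/-- `G` has boundary of class `C¹`. -/
def C1Boundary {N : ℕ} (G : Set (EuclideanSpace ℝ (Fin N))) : Prop :=
  ∃ f : EuclideanSpace ℝ (Fin N) → ℝ,
    ContDiff ℝ 1 f ∧ G = {x | f x < 0} ∧ frontier G = {x | f x = 0} ∧
    ∀ x ∈ frontier G, fderiv ℝ f x ≠ 0

/-- `G` has boundary of class `C²`. -/
def C2Boundary {N : ℕ} (G : Set (EuclideanSpace ℝ (Fin N))) : Prop :=
  ∃ f : EuclideanSpace ℝ (Fin N) → ℝ,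
    ContDiff ℝ 2 f ∧ G = {x | f x < 0} ∧ frontier G = {x | f x = 0} ∧
    ∀ x ∈ frontier G, fderiv ℝ f x ≠ 0

/-- Reflection `x^λ = x - 2 (x·ω - λ) ω` of `x` in the hyperplane `π_λ = {x : x·ω = λ}`. -/
noncomputable def reflPt {N : ℕ} (ω : EuclideanSpace ℝ (Fin N)) (lam : ℝ)
    (x : EuclideanSpace ℝ (Fin N)) : EuclideanSpace ℝ (Fin N) :=
  x - (2 * ((inner ℝ x ω : ℝ) - lam)) • ω

/-- The right-hand cap `A_λ = {x ∈ A : x·ω > λ}`. -/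
def rightCap {N : ℕ} (A : Set (EuclideanSpace ℝ (Fin N))) (ω : EuclideanSpace ℝ (Fin N))
    (lam : ℝ) : Set (EuclideanSpace ℝ (Fin N)) :=
  {x ∈ A | lam < (inner ℝ x ω : ℝ)}

/-- The reflected cap `A^λ = {x : x^λ ∈ A_λ}`. -/
noncomputable def reflCap {N : ℕ} (A : Set (EuclideanSpace ℝ (Fin N)))
    (ω : EuclideanSpace ℝ (Fin N)) (lam : ℝ) : Set (EuclideanSpace ℝ (Fin N)) :=
  {x | reflPt ω lam x ∈ rightCap A ω lam}

/-- The critical value `m = inf {μ : G^λ ⊆ G for all λ ∈ (μ, M)}` of the moving plane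
method in the direction `ω`, where `M = sup {x·ω : x ∈ G}`. -/
noncomputable def criticalValue {N : ℕ} (G : Set (EuclideanSpace ℝ (Fin N)))
    (ω : EuclideanSpace ℝ (Fin N)) : ℝ :=
  sInf {μ : ℝ | ∀ lam : ℝ, μ < lam →
    lam < sSup ((fun x => (inner ℝ x ω : ℝ)) '' G) → reflCap G ω lam ⊆ G}

/-- The part of `A` where the `i`-th coordinate is positive. -/
def plusPart {N : ℕ} (i : Fin N) (A : Set (EuclideanSpace ℝ (Fin N))) :
    Set (EuclideanSpace ℝ (Fin N)) :=
  {x ∈ A | 0 < x i}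

/-- `ν` is the exterior unit normal to `A` at the boundary point `x`. -/
def IsExteriorNormalAt {N : ℕ} (A : Set (EuclideanSpace ℝ (Fin N)))
    (x ν : EuclideanSpace ℝ (Fin N)) : Prop :=
  ‖ν‖ = 1 ∧ ∃ ε > 0, ∀ t : ℝ, 0 < t → t < ε → x - t • ν ∈ A ∧ x + t • ν ∉ closure A

/-- The norm `‖u‖_{C²} = max |u| + max |Du| + max |D²u|` over the set `S`. -/
noncomputable def C2NormOn {N : ℕ} (u : EuclideanSpace ℝ (Fin N) → ℝ)
    (S : Set (EuclideanSpace ℝ (Fin N))) : ℝ :=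
  sSup ((fun x => |u x|) '' S) + sSup ((fun x => ‖fderivWithin ℝ u S x‖) '' S) +
    sSup ((fun x => ‖fderivWithin ℝ (fderivWithin ℝ u S) S x‖) '' S)

/-- `G` satisfies a uniform interior ball condition of radius `ρ`: at every boundary point
there is an open ball of radius `ρ` contained in `G` whose closure touches the boundary there. -/
def UniformInteriorBall {N : ℕ} (G : Set (EuclideanSpace ℝ (Fin N))) (ρ : ℝ) : Prop :=
  ∀ p ∈ frontier G, ∃ c : EuclideanSpace ℝ (Fin N), ball c ρ ⊆ G ∧ p ∈ sphere c ρ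

namespace HopfAux
variable {N : ℕ}

lemma hasFDerivAt_coord (i : Fin N) (x : EuclideanSpace ℝ (Fin N)) :
    HasFDerivAt (fun y : EuclideanSpace ℝ (Fin N) => y i)
      (EuclideanSpace.proj i : EuclideanSpace ℝ (Fin N) →L[ℝ] ℝ) x := by
  have := (EuclideanSpace.proj (𝕜 := ℝ) i).hasFDerivAt (x := x)
  change HasFDerivAt _ _ _ at this
  exact this

lemma proj_single (i j : Fin N) :
    (EuclideanSpace.proj i : EuclideanSpace ℝ (Fin N) →L[ℝ] ℝ) (EuclideanSpace.single j 1)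
      = if i = j then 1 else 0 := by
  change (EuclideanSpace.single j (1:ℝ)) i = _
  rw [EuclideanSpace.single_apply]

noncomputable def Qf (c x : EuclideanSpace ℝ (Fin N)) : ℝ := ∑ i, (x i - c i)^2

noncomputable def DQ (c x : EuclideanSpace ℝ (Fin N)) : EuclideanSpace ℝ (Fin N) →L[ℝ] ℝ :=
  ∑ i, (2 * (x i - c i)) • (EuclideanSpace.proj i : EuclideanSpace ℝ (Fin N) →L[ℝ] ℝ)

lemma hasFDerivAt_Qf (c x : EuclideanSpace ℝ (Fin N)) : HasFDerivAt (Qf c) (DQ c x) x := by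
  have h : ∀ i ∈ Finset.univ, HasFDerivAt (fun y : EuclideanSpace ℝ (Fin N) => (y i - c i)^2)
      ((2 * (x i - c i)) • (EuclideanSpace.proj i : EuclideanSpace ℝ (Fin N) →L[ℝ] ℝ)) x := by
    intro i _
    have h1 : HasFDerivAt (fun y : EuclideanSpace ℝ (Fin N) => y i - c i)
        (EuclideanSpace.proj i : EuclideanSpace ℝ (Fin N) →L[ℝ] ℝ) x :=
      (hasFDerivAt_coord i x).sub_const _
    have h2 := h1.mul h1
    have h3 : (fun y : EuclideanSpace ℝ (Fin N) => (y i - c i)^2)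
        = fun y => (y i - c i) * (y i - c i) := by funext y; ring
    rw [h3]
    rw [show (2 * (x i - c i)) • (EuclideanSpace.proj i : EuclideanSpace ℝ (Fin N) →L[ℝ] ℝ)
        = (x i - c i) • EuclideanSpace.proj i + (x i - c i) • EuclideanSpace.proj i by
      rw [← add_smul]; congr 1; ring]
    exact h2
  exact HasFDerivAt.fun_sum h

noncomputable def vb (α : ℝ) (c x : EuclideanSpace ℝ (Fin N)) : ℝ := Real.exp (-α * Qf c x)

lemma vb_pos (α : ℝ) (c x : EuclideanSpace ℝ (Fin N)) : 0 < vb α c x := Real.exp_pos _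

lemma hasFDerivAt_vb (α : ℝ) (c x : EuclideanSpace ℝ (Fin N)) :
    HasFDerivAt (vb α c) ((vb α c x * -α) • DQ c x) x := by
  have h := ((hasFDerivAt_Qf c x).const_mul (-α)).exp
  rw [smul_smul] at h
  exact h

lemma DQ_apply_single (c x : EuclideanSpace ℝ (Fin N)) (j : Fin N) :
    DQ c x (EuclideanSpace.single j 1) = 2 * (x j - c j) := by
  simp only [DQ, ContinuousLinearMap.coe_sum', Finset.sum_apply,
    ContinuousLinearMap.coe_smul', Pi.smul_apply, proj_single, smul_eq_mul]
  rw [Finset.sum_eq_single j]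
  · simp
  · intro b _ hb; simp [hb]
  · simp

lemma fderiv_vb_single (α : ℝ) (c x : EuclideanSpace ℝ (Fin N)) (j : Fin N) :
    fderiv ℝ (vb α c) x (EuclideanSpace.single j 1) = -(2*α) * (x j - c j) * vb α c x := by
  rw [(hasFDerivAt_vb α c x).fderiv]
  simp only [ContinuousLinearMap.coe_smul', Pi.smul_apply, smul_eq_mul, DQ_apply_single]
  ring

noncomputable def psib (α : ℝ) (c : EuclideanSpace ℝ (Fin N)) (j : Fin N)
    (x : EuclideanSpace ℝ (Fin N)) : ℝ := -(2*α) * (x j - c j) * vb α c x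

lemma fderiv_vb_eq_psib (α : ℝ) (c : EuclideanSpace ℝ (Fin N)) (j : Fin N) :
    (fun y => fderiv ℝ (vb α c) y (EuclideanSpace.single j 1)) = psib α c j := by
  funext y; exact fderiv_vb_single α c y j

lemma hasFDerivAt_psib (α : ℝ) (c : EuclideanSpace ℝ (Fin N)) (j : Fin N)
    (x : EuclideanSpace ℝ (Fin N)) :
    HasFDerivAt (psib α c j)
      ((-(2*α) * (x j - c j)) • ((vb α c x * -α) • DQ c x)
        + vb α c x • (-(2*α)) • (EuclideanSpace.proj j : EuclideanSpace ℝ (Fin N) →L[ℝ] ℝ)) x := by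
  have h1 : HasFDerivAt (fun y : EuclideanSpace ℝ (Fin N) => -(2*α) * (y j - c j))
      ((-(2*α)) • (EuclideanSpace.proj j : EuclideanSpace ℝ (Fin N) →L[ℝ] ℝ)) x :=
    ((hasFDerivAt_coord j x).sub_const _).const_mul _
  exact h1.mul (hasFDerivAt_vb α c x)

lemma second_deriv_vb (α : ℝ) (c x : EuclideanSpace ℝ (Fin N)) (j : Fin N) :
    fderiv ℝ (fun y => fderiv ℝ (vb α c) y (EuclideanSpace.single j 1)) x
      (EuclideanSpace.single j 1)
      = (4*α^2*(x j - c j)^2 - 2*α) * vb α c x := by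
  rw [fderiv_vb_eq_psib, (hasFDerivAt_psib α c j x).fderiv]
  simp only [ContinuousLinearMap.add_apply, ContinuousLinearMap.coe_smul', Pi.smul_apply,
    smul_eq_mul, DQ_apply_single, proj_single, if_true]
  ring

lemma lapl_vb (α : ℝ) (c x : EuclideanSpace ℝ (Fin N)) :
    lapl (vb α c) x = (4*α^2 * Qf c x - 2*α*N) * vb α c x := by
  unfold lapl
  rw [Finset.sum_congr rfl (fun j _ => second_deriv_vb α c x j)]
  rw [← Finset.sum_mul]
  congr 1
  rw [Finset.sum_sub_distrib, ← Finset.mul_sum]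
  simp [Qf, Finset.card_univ, mul_comm]

lemma contDiff_vb (α : ℝ) (c : EuclideanSpace ℝ (Fin N)) : ContDiff ℝ 2 (vb α c) := by
  have h1 : ContDiff ℝ 2 (fun x : EuclideanSpace ℝ (Fin N) => -α * Qf c x) := by
    have hq : ContDiff ℝ 2 (Qf c (N := N)) := by
      apply ContDiff.sum
      intro i _
      have h2 : (fun y : EuclideanSpace ℝ (Fin N) => (y i - c i)^2)
          = fun y => ((EuclideanSpace.proj (𝕜 := ℝ) i) y - c i)^2 := rfl
      rw [h2]
      exact (((EuclideanSpace.proj (𝕜 := ℝ) i).contDiff).sub contDiff_const).pow 2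
    exact contDiff_const.mul hq
  exact (Real.contDiff_exp (n := 2)).comp h1



lemma second_deriv_nonpos_of_localmax {h : EuclideanSpace ℝ (Fin N) → ℝ}
    {x : EuclideanSpace ℝ (Fin N)} (hx : ContDiffAt ℝ 2 h x)
    (hmax : IsLocalMax h x) (e : EuclideanSpace ℝ (Fin N)) :
    fderiv ℝ (fun y => fderiv ℝ h y e) x e ≤ 0 := by
  by_contra hA'
  push_neg at hA'
  set φ : EuclideanSpace ℝ (Fin N) → ℝ := fun y => fderiv ℝ h y e with hφdef
  set A : ℝ := fderiv ℝ φ x e with hAdef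
  have hA : 0 < A := hA'
  set γ : ℝ → EuclideanSpace ℝ (Fin N) := fun s => x + s • e with hγdef
  have hγ0 : γ 0 = x := by simp [hγdef]
  have hγd : ∀ t : ℝ, HasDerivAt γ e t := by
    intro t
    have := ((hasDerivAt_id t).smul_const e).const_add x
    rw [one_smul] at this
    exact this
  have htends : Filter.Tendsto γ (nhds 0) (nhds x) := by
    rw [← hγ0]
    exact (hγd 0).continuousAt.tendsto
  set g : ℝ → ℝ := fun t => h (γ t) with hgdef
  set ψ : ℝ → ℝ := fun t => fderiv ℝ h (γ t) e with hψdef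
  have hg0 : g 0 = h x := by rw [hgdef]; simp only []; rw [hγ0]
  -- h is differentiable near x
  have hev : ∀ᶠ y in nhds x, DifferentiableAt ℝ h y := by
    have h1 : ∀ᶠ y in nhds x, ContDiffAt ℝ 2 h y := hx.eventually (by simp)
    exact h1.mono fun y hy => hy.differentiableAt two_ne_zero
  have hgd : ∀ᶠ t in nhds (0:ℝ), HasDerivAt g (ψ t) t := by
    filter_upwards [htends.eventually hev] with t ht
    exact ht.hasFDerivAt.comp_hasDerivAt t (hγd t)
  have hmaxg : ∀ᶠ t in nhds (0:ℝ), g t ≤ g 0 := by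
    filter_upwards [htends.eventually hmax] with t ht
    rw [hg0]; exact ht
  -- φ differentiable at x
  have hφdiff : DifferentiableAt ℝ φ x := by
    have h1 : ContDiffAt ℝ 1 (fderiv ℝ h) x := hx.fderiv_right le_rfl
    have h2 := ((ContinuousLinearMap.apply ℝ ℝ e).differentiableAt).comp x
      (h1.differentiableAt one_ne_zero)
    exact h2
  have hψd : HasDerivAt ψ A 0 := by
    have hF : HasFDerivAt φ (fderiv ℝ φ x) (γ 0) := by
      rw [hγ0]; exact hφdiff.hasFDerivAt
    exact hF.comp_hasDerivAt 0 (hγd 0)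
  have hψ0 : ψ 0 = 0 := by
    have hg0' : HasDerivAt g (ψ 0) 0 := hgd.self_of_nhds
    have hlm : IsLocalMax g 0 := hmaxg
    have := hlm.deriv_eq_zero
    rw [← hg0'.deriv]
    exact this
  -- ψ is eventually positive on the right
  have hslope : Filter.Tendsto (fun t => ψ t / t) (nhdsWithin 0 (Ioi 0)) (nhds A) := by
    have h1 := hasDerivAt_iff_tendsto_slope.mp hψd
    have h2 : Filter.Tendsto (slope ψ 0) (nhdsWithin 0 (Ioi 0)) (nhds A) :=
      h1.mono_left (nhdsWithin_mono _ (fun t ht => by simpa using ne_of_gt ht))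
    refine h2.congr fun t => ?_
    rw [slope_def_field, hψ0]
    simp
  have hψpos : ∀ᶠ t in nhdsWithin (0:ℝ) (Ioi 0), 0 < ψ t := by
    have h1 : ∀ᶠ t in nhdsWithin (0:ℝ) (Ioi 0), 0 < ψ t / t :=
      hslope.eventually (eventually_gt_nhds hA)
    filter_upwards [h1, self_mem_nhdsWithin] with t h2 (h3 : t ∈ Ioi 0)
    have := mul_pos h2 h3
    rwa [div_mul_cancel₀ _ (ne_of_gt h3)] at this
  -- extract concrete intervals
  obtain ⟨δ, hδpos, hδ⟩ := Metric.eventually_nhds_iff.mp (hgd.and hmaxg)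
  obtain ⟨u, hu, huS⟩ := mem_nhdsGT_iff_exists_Ioo_subset.mp hψpos
  have hu0 : (0:ℝ) < u := hu
  set ε : ℝ := min (δ/2) (u/2) with hεdef
  have hεpos : 0 < ε := lt_min (by linarith) (by linarith)
  have hεδ : ∀ t : ℝ, t ∈ Icc 0 ε → dist t 0 < δ := by
    intro t ht
    rw [Real.dist_eq, sub_zero, abs_of_nonneg ht.1]
    calc t ≤ ε := ht.2
    _ ≤ δ/2 := min_le_left _ _
    _ < δ := by linarith
  have hcont : ContinuousOn g (Icc 0 ε) := by
    intro t ht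
    exact ((hδ (hεδ t ht)).1.continuousAt).continuousWithinAt
  have hmono : StrictMonoOn g (Icc 0 ε) := by
    apply strictMonoOn_of_deriv_pos (convex_Icc 0 ε) hcont
    intro t ht
    rw [interior_Icc] at ht
    have h1 : HasDerivAt g (ψ t) t := (hδ (hεδ t ⟨le_of_lt ht.1, le_of_lt ht.2⟩)).1
    rw [h1.deriv]
    apply huS
    exact ⟨ht.1, lt_of_lt_of_le ht.2 (le_trans (min_le_right _ _) (by linarith))⟩
  have h1 : g 0 < g ε := hmono ⟨le_refl 0, le_of_lt hεpos⟩ ⟨le_of_lt hεpos, le_refl ε⟩ hεpos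
  have h2 : g ε ≤ g 0 := (hδ (hεδ ε ⟨le_of_lt hεpos, le_refl ε⟩)).2
  linarith

lemma lapl_nonpos_of_localmax {h : EuclideanSpace ℝ (Fin N) → ℝ}
    {x : EuclideanSpace ℝ (Fin N)} (hx : ContDiffAt ℝ 2 h x)
    (hmax : IsLocalMax h x) : lapl h x ≤ 0 :=
  Finset.sum_nonpos fun j _ => second_deriv_nonpos_of_localmax hx hmax _

lemma weak_max {U : Set (EuclideanSpace ℝ (Fin N))} (hU : IsOpen U)
    (hb : Bornology.IsBounded U) {h : EuclideanSpace ℝ (Fin N) → ℝ}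
    (hcont : ContinuousOn h (closure U)) (hd : ∀ x ∈ U, ContDiffAt ℝ 2 h x)
    (hsub : ∀ x ∈ U, 0 < lapl h x) (hbd : ∀ x ∈ frontier U, h x ≤ 0) :
    ∀ x ∈ closure U, h x ≤ 0 := by
  intro x hx
  have hcomp : IsCompact (closure U) :=
    Metric.isCompact_of_isClosed_isBounded isClosed_closure hb.closure
  obtain ⟨x₀, hx₀S, hx₀max⟩ := hcomp.exists_isMaxOn ⟨x, hx⟩ hcont
  have key : h x₀ ≤ 0 := by
    by_cases hmem : x₀ ∈ U
    · exfalso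
      have hloc : IsLocalMax h x₀ :=
        hx₀max.isLocalMax (Filter.mem_of_superset (hU.mem_nhds hmem) subset_closure)
      have := lapl_nonpos_of_localmax (hd x₀ hmem) hloc
      linarith [hsub x₀ hmem]
    · refine hbd x₀ ?_
      rw [hU.frontier_eq]
      exact ⟨hx₀S, hmem⟩
  exact le_trans (isMaxOn_iff.mp hx₀max x hx) key




lemma diff_snd {w : EuclideanSpace ℝ (Fin N) → ℝ} {x : EuclideanSpace ℝ (Fin N)}
    (hw : ContDiffAt ℝ 2 w x) (e : EuclideanSpace ℝ (Fin N)) :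
    DifferentiableAt ℝ (fun y => fderiv ℝ w y e) x := by
  have h1 : ContDiffAt ℝ 1 (fderiv ℝ w) x := hw.fderiv_right le_rfl
  exact ((ContinuousLinearMap.apply ℝ ℝ e).differentiableAt).comp x (h1.differentiableAt one_ne_zero)

lemma contDiffAt_combo (α a b : ℝ) (c : EuclideanSpace ℝ (Fin N))
    {w : EuclideanSpace ℝ (Fin N) → ℝ} {x : EuclideanSpace ℝ (Fin N)}
    (hw : ContDiffAt ℝ 2 w x) :
    ContDiffAt ℝ 2 (fun y => a * vb α c y + b - w y) x :=
  ((contDiffAt_const.mul (contDiff_vb α c).contDiffAt).add contDiffAt_const).sub hw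

lemma lapl_combo (α a b : ℝ) (c : EuclideanSpace ℝ (Fin N))
    {w : EuclideanSpace ℝ (Fin N) → ℝ} {x : EuclideanSpace ℝ (Fin N)}
    (hw : ContDiffAt ℝ 2 w x) :
    lapl (fun y => a * vb α c y + b - w y) x = a * lapl (vb α c) x - lapl w x := by
  unfold lapl
  rw [Finset.mul_sum, ← Finset.sum_sub_distrib]
  apply Finset.sum_congr rfl
  intro j _
  set e := EuclideanSpace.single j (1:ℝ) with hedef
  have hev : ∀ᶠ y in nhds x, DifferentiableAt ℝ w y := by
    have h1 : ∀ᶠ y in nhds x, ContDiffAt ℝ 2 w y := hw.eventually (by simp)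
    exact h1.mono fun y hy => hy.differentiableAt two_ne_zero
  have heq : (fun y => fderiv ℝ (fun z => a * vb α c z + b - w z) y e)
      =ᶠ[nhds x] (fun y => a * psib α c j y - fderiv ℝ w y e) := by
    filter_upwards [hev] with y hy
    have hH : HasFDerivAt (fun z => a * vb α c z + b - w z)
        ((a • ((vb α c y * -α) • DQ c y)) - fderiv ℝ w y) y := by
      have h1 := (hasFDerivAt_vb α c y).const_mul a
      have h2 := h1.add_const b
      exact h2.sub hy.hasFDerivAt
    rw [hH.fderiv]
    simp only [ContinuousLinearMap.sub_apply, ContinuousLinearMap.coe_smul', Pi.smul_apply,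
      smul_eq_mul, hedef, DQ_apply_single, psib]
    ring
  rw [heq.fderiv_eq]
  have hψ : DifferentiableAt ℝ (psib α c j) x := (hasFDerivAt_psib α c j x).differentiableAt
  rw [fderiv_fun_sub (hψ.const_mul a) (diff_snd hw e)]
  rw [fderiv_const_mul hψ a]
  rw [fderiv_vb_eq_psib]
  simp only [ContinuousLinearMap.sub_apply, ContinuousLinearMap.coe_smul', Pi.smul_apply,
    smul_eq_mul]

lemma Qf_eq_dist (c y : EuclideanSpace ℝ (Fin N)) : Qf c y = dist y c ^ 2 := by
  rw [EuclideanSpace.dist_eq, Real.sq_sqrt]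
  · unfold Qf
    apply Finset.sum_congr rfl
    intro i _
    rw [Real.dist_eq, sq_abs]
  · exact Finset.sum_nonneg fun i _ => sq_nonneg _

lemma hopf_barrier (hN : 1 ≤ N) {s : ℝ} (hs : 0 < s) :
    ∃ κ > 0, ∀ (c : EuclideanSpace ℝ (Fin N)) (m : ℝ) (w : EuclideanSpace ℝ (Fin N) → ℝ),
      0 ≤ m →
      ContinuousOn w (closedBall c s \ ball c (s/2)) →
      (∀ x, dist x c < s → s/2 < dist x c → ContDiffAt ℝ 2 w x) →
      (∀ x, dist x c < s → s/2 < dist x c → lapl w x = 0) →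
      (∀ x, dist x c ≤ s → s/2 ≤ dist x c → 0 ≤ w x) →
      (∀ x, dist x c = s/2 → m ≤ w x) →
      ∀ x, dist x c < s → s/2 < dist x c → κ * m * (s - dist x c) ≤ w x := by
  set α : ℝ := 2*(N:ℝ)/s^2 with hαdef
  have hN0 : (0:ℝ) < N := by exact_mod_cast Nat.lt_of_lt_of_le Nat.zero_lt_one hN
  have hα : 0 < α := by positivity
  set A : ℝ := Real.exp (-α * s^2) with hAdef
  set A4 : ℝ := Real.exp (-α * (s/2)^2) with hA4def
  have hdpos : 0 < A4 - A := by
    rw [sub_pos, hAdef, hA4def]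
    apply Real.exp_lt_exp.mpr
    have h1 : 0 < α * s^2 := by positivity
    nlinarith
  set d : ℝ := A4 - A with hddef
  have hApos : 0 < A := Real.exp_pos _
  have hA4pos : 0 < A4 := Real.exp_pos _
  have hαs : α * s^2 = 2*(N:ℝ) := by rw [hαdef]; field_simp
  clear_value d A4 A α
  refine ⟨α * s * A / d, by positivity, ?_⟩
  intro c m w hm hcont hC2 hharm hnn hmb x hx1 hx2
  rcases eq_or_lt_of_le hm with hm0 | hmpos
  · have h0 : α * s * A / d * m * (s - dist x c) = 0 := by rw [← hm0]; ring
    rw [h0]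
    exact hnn x (le_of_lt hx1) (le_of_lt hx2)
  set U : Set (EuclideanSpace ℝ (Fin N)) := ball c s \ closedBall c (s/2) with hUdef
  have hUopen : IsOpen U := isOpen_ball.sdiff Metric.isClosed_closedBall
  have hUb : Bornology.IsBounded U := Metric.isBounded_ball.subset diff_subset
  have hUsub : U ⊆ closedBall c s \ ball c (s/2) := by
    intro y hy
    rcases hy with ⟨h1, h2⟩
    rw [mem_ball] at h1
    rw [mem_closedBall, not_le] at h2
    exact ⟨mem_closedBall.mpr (le_of_lt h1), fun h => absurd (mem_ball.mp h) (not_lt.mpr (le_of_lt h2))⟩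
  have hDclosed : IsClosed (closedBall c s \ ball c (s/2)) :=
    Metric.isClosed_closedBall.inter (isClosed_compl_iff.mpr isOpen_ball)
  have hclosU : closure U ⊆ closedBall c s \ ball c (s/2) := closure_minimal hUsub hDclosed
  have hmemU : ∀ y ∈ U, dist y c < s ∧ s/2 < dist y c := by
    intro y hy
    rcases hy with ⟨h1, h2⟩
    rw [mem_ball] at h1
    rw [mem_closedBall, not_le] at h2
    exact ⟨h1, h2⟩
  set V : EuclideanSpace ℝ (Fin N) → ℝ := fun y => (m/d) * vb α c y + (-((m/d) * A)) - w y
    with hVdef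
  have hmd : 0 < m / d := by positivity
  have key : ∀ y ∈ closure U, V y ≤ 0 := by
    apply weak_max hUopen hUb
    · apply ContinuousOn.sub
      · exact ((continuous_const.mul (contDiff_vb α c).continuous).add continuous_const).continuousOn
      · exact hcont.mono hclosU
    · intro y hy
      obtain ⟨h1, h2⟩ := hmemU y hy
      exact contDiffAt_combo α (m/d) (-((m/d) * A)) c (hC2 y h1 h2)
    · intro y hy
      obtain ⟨h1, h2⟩ := hmemU y hy
      rw [hVdef]
      rw [lapl_combo α (m/d) (-((m/d) * A)) c (hC2 y h1 h2), hharm y h1 h2, lapl_vb]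
      have hq : Qf c y = dist y c ^ 2 := Qf_eq_dist c y
      have hvpos := vb_pos α c y
      have hr0 : (0:ℝ) ≤ dist y c := dist_nonneg
      have hbracket : 0 < 4*α^2 * Qf c y - 2*α*N := by
        have h4 : (s/2)^2 < Qf c y := by
          rw [hq]
          nlinarith [dist_nonneg (x := y) (y := c)]
        have h5 : α^2 * s^2 = α * (2*(N:ℝ)) := by rw [← hαs]; ring
        have key2 : 4*α^2 * Qf c y - 2*α*N = 4*α^2*(Qf c y - (s/2)^2) := by
          linear_combination h5
        rw [key2]
        apply mul_pos (by positivity)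
        linarith
      have : 0 < (m/d) * ((4*α^2 * Qf c y - 2*α*N) * vb α c y) := by positivity
      linarith
    · intro y hy
      have hyD : y ∈ closedBall c s \ ball c (s/2) := by
        apply hclosU
        rw [hUopen.frontier_eq] at hy
        exact hy.1
      rw [hUopen.frontier_eq] at hy
      obtain ⟨hycl, hynotU⟩ := hy
      have h1 : dist y c ≤ s := mem_closedBall.mp hyD.1
      have h2 : s/2 ≤ dist y c := not_lt.mp (fun h => hyD.2 (mem_ball.mpr h))
      have hcases : dist y c = s ∨ dist y c = s/2 := by
        by_contra hne
        push_neg at hne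
        exact hynotU ⟨mem_ball.mpr (lt_of_le_of_ne h1 hne.1),
          fun h => (lt_of_le_of_ne h2 (Ne.symm hne.2)).not_ge (mem_closedBall.mp h)⟩
      have hQy : Qf c y = dist y c ^ 2 := Qf_eq_dist c y
      rcases hcases with he | he
      · have hv : vb α c y = A := by rw [hAdef]; unfold vb; rw [hQy, he]
        have hw0 : 0 ≤ w y := hnn y h1 h2
        rw [hVdef]
        simp only []
        rw [hv]
        linarith
      · have hv : vb α c y = A4 := by rw [hA4def]; unfold vb; rw [hQy, he]
        have hwm : m ≤ w y := hmb y he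
        rw [hVdef]
        simp only []
        rw [hv]
        have hmm : (m/d) * A4 + (-((m/d)*A)) = m := by
          have h9 : (m/d) * A4 + (-((m/d)*A)) = (m/d) * d := by rw [hddef]; ring
          rw [h9, div_mul_cancel₀ m (ne_of_gt hdpos)]
        linarith
  -- now conclude
  have hxU : x ∈ U := by
    constructor
    · exact mem_ball.mpr hx1
    · rw [mem_closedBall]; push_neg; exact hx2
  have hVx : V x ≤ 0 := key x (subset_closure hxU)
  set r : ℝ := dist x c with hrdef
  have hr0 : 0 ≤ r := dist_nonneg
  have hrs : r < s := hx1
  have hlow : A * (α * s * (s - r)) ≤ vb α c x - A := by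
    have hQx : Qf c x = r^2 := Qf_eq_dist c x
    have hexp : vb α c x = A * Real.exp (α * (s^2 - r^2)) := by
      unfold vb
      rw [hQx, hAdef, ← Real.exp_add]
      congr 1
      ring
    rw [hexp]
    have h1 : α * (s^2 - r^2) + 1 ≤ Real.exp (α * (s^2 - r^2)) := Real.add_one_le_exp _
    have h2 : α * s * (s - r) ≤ α * (s^2 - r^2) := by
      nlinarith [mul_nonneg (mul_nonneg hα.le hr0) (sub_nonneg.mpr hrs.le)]
    nlinarith [mul_le_mul_of_nonneg_left h1 hApos.le, mul_le_mul_of_nonneg_left h2 hApos.le]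
  have hfin : (m/d) * vb α c x + (-((m/d) * A)) - w x ≤ 0 := hVx
  have hd0 : d ≠ 0 := ne_of_gt hdpos
  have heq2 : α * s * A / d * m * (s - r) = (m/d) * (A * (α * s * (s - r))) := by
    field_simp
  rw [heq2]
  have h3 : (m/d) * (A * (α * s * (s - r))) ≤ (m/d) * (vb α c x - A) :=
    mul_le_mul_of_nonneg_left hlow (le_of_lt hmd)
  have h4 : (m/d) * (vb α c x - A) = (m/d) * vb α c x + (-((m/d) * A)) := by ring
  linarith


lemma euclidean_nontrivial (hN : 1 ≤ N) : Nontrivial (EuclideanSpace ℝ (Fin N)) := by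
  refine ⟨⟨EuclideanSpace.single ⟨0, hN⟩ (1:ℝ), 0, fun h => ?_⟩⟩
  have h1 := congrArg (fun v : EuclideanSpace ℝ (Fin N) => v ⟨0, hN⟩) h
  simp [EuclideanSpace.single_apply] at h1

lemma strong_max (hN : 1 ≤ N) {Ω : Set (EuclideanSpace ℝ (Fin N))} (hΩo : IsOpen Ω)
    (hΩc : IsPreconnected Ω) {w : EuclideanSpace ℝ (Fin N) → ℝ}
    (hC2 : ∀ x ∈ Ω, ContDiffAt ℝ 2 w x) (hharm : ∀ x ∈ Ω, lapl w x = 0)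
    (hnn : ∀ x ∈ Ω, 0 ≤ w x) {p₀ : EuclideanSpace ℝ (Fin N)} (hp₀ : p₀ ∈ Ω) (hp₀0 : w p₀ = 0) :
    ∀ x ∈ Ω, w x = 0 := by
  haveI : Nontrivial (EuclideanSpace ℝ (Fin N)) := euclidean_nontrivial hN
  have hwc : ContinuousOn w Ω := fun x hx => (hC2 x hx).continuousAt.continuousWithinAt
  set Z : Set (EuclideanSpace ℝ (Fin N)) := {x | x ∈ Ω ∧ w x = 0} with hZdef
  set P : Set (EuclideanSpace ℝ (Fin N)) := {x | x ∈ Ω ∧ 0 < w x} with hPdef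
  have hZopen : IsOpen Z := by
    rw [Metric.isOpen_iff]
    rintro p ⟨hpΩ, hp0⟩
    obtain ⟨ε, hε, hball⟩ := Metric.isOpen_iff.mp hΩo p hpΩ
    refine ⟨ε/3, by linarith, ?_⟩
    set δ : ℝ := ε/3 with hδdef
    have hcb : closedBall p (2*δ) ⊆ Ω := by
      intro x hx
      apply hball
      rw [mem_ball]
      calc dist x p ≤ 2*δ := mem_closedBall.mp hx
      _ < ε := by rw [hδdef]; linarith
    intro y hy
    have hyδ : dist y p < δ := mem_ball.mp hy
    have hyΩ : y ∈ Ω := hcb (mem_closedBall.mpr (by linarith))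
    refine ⟨hyΩ, ?_⟩
    by_contra hwy
    have hwypos : 0 < w y := lt_of_le_of_ne (hnn y hyΩ) (Ne.symm hwy)
    -- the compact zero set near p
    set Z' : Set (EuclideanSpace ℝ (Fin N)) := {x ∈ closedBall p (2*δ) | w x = 0} with hZ'def
    have hZ'closed : IsClosed Z' := by
      have h1 : ContinuousOn w (closedBall p (2*δ)) := hwc.mono hcb
      have h2 : IsClosed (closedBall p (2*δ) ∩ w ⁻¹' {(0:ℝ)}) :=
        h1.preimage_isClosed_of_isClosed Metric.isClosed_closedBall isClosed_singleton
      have h3 : Z' = closedBall p (2*δ) ∩ w ⁻¹' {(0:ℝ)} := by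
        ext x
        simp [hZ'def, Set.mem_setOf_eq]
      rw [h3]
      exact h2
    have hZ'cpt : IsCompact Z' := (isCompact_closedBall p (2*δ)).of_isClosed_subset hZ'closed
      (fun x hx => hx.1)
    have hZ'ne : Z'.Nonempty := ⟨p, mem_closedBall.mpr (by rw [dist_self]; linarith), hp0⟩
    obtain ⟨q, hqZ', hqdist⟩ := hZ'cpt.exists_infDist_eq_dist hZ'ne y
    set s : ℝ := infDist y Z' with hsdef
    have hsle : s ≤ dist y p := infDist_le_dist_of_mem ⟨mem_closedBall.mpr (by rw [dist_self]; linarith), hp0⟩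
    have hspos : 0 < s := by
      rcases eq_or_lt_of_le (dist_nonneg (x := y) (y := q)) with h | h
      · exfalso
        have : y = q := dist_eq_zero.mp h.symm
        rw [this] at hwy
        exact hwy hqZ'.2
      · rw [hqdist]; exact h
    have hcbs : closedBall y s ⊆ Ω := by
      intro x hx
      apply hcb
      rw [mem_closedBall]
      calc dist x p ≤ dist x y + dist y p := dist_triangle x y p
      _ ≤ s + δ := add_le_add (mem_closedBall.mp hx) (le_of_lt hyδ)
      _ ≤ 2*δ := by linarith
    have hballpos : ∀ x ∈ ball y s, 0 < w x := by
      intro x hx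
      have hxΩ : x ∈ Ω := hcbs (ball_subset_closedBall hx)
      rcases eq_or_lt_of_le (hnn x hxΩ) with h | h
      · exfalso
        have hxZ' : x ∈ Z' := by
          refine ⟨?_, h.symm⟩
          rw [mem_closedBall]
          calc dist x p ≤ dist x y + dist y p := dist_triangle x y p
          _ ≤ s + δ := add_le_add (le_of_lt (mem_ball.mp hx)) (le_of_lt hyδ)
          _ ≤ 2*δ := by linarith
        have h8 : infDist y Z' ≤ dist y x := infDist_le_dist_of_mem hxZ'
        rw [← hsdef] at h8
        rw [dist_comm] at h8
        exact absurd (mem_ball.mp hx) (not_lt.mpr h8)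
      · exact h
    -- minimum on the inner sphere
    have hsphne : (sphere y (s/2)).Nonempty := NormedSpace.sphere_nonempty.mpr (by linarith)
    have hsphsub : sphere y (s/2) ⊆ ball y s := fun x hx => by
      rw [mem_ball, mem_sphere] at *
      rw [hx]; linarith
    obtain ⟨xm, hxm, hxmmin⟩ := (isCompact_sphere y (s/2)).exists_isMinOn hsphne
      (hwc.mono (fun x hx => hcbs (ball_subset_closedBall (hsphsub hx))))
    set m : ℝ := w xm with hmdef
    have hmpos : 0 < m := hballpos xm (hsphsub hxm)
    -- apply the Hopf barrier
    obtain ⟨κ, hκpos, hκ⟩ := hopf_barrier hN hspos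
    have hbar := hκ y m w (le_of_lt hmpos)
      (hwc.mono (fun x hx => hcbs hx.1))
      (fun x h1 h2 => hC2 x (hcbs (ball_subset_closedBall (mem_ball.mpr h1))))
      (fun x h1 h2 => hharm x (hcbs (ball_subset_closedBall (mem_ball.mpr h1))))
      (fun x h1 h2 => hnn x (hcbs (mem_closedBall.mpr h1)))
      (fun x hx => isMinOn_iff.mp hxmmin x (mem_sphere.mpr hx))
    -- derivative of w at q vanishes
    have hqΩ : q ∈ Ω := hcb hqZ'.1
    have hqmin : IsLocalMin w q := by
      filter_upwards [hΩo.mem_nhds hqΩ] with x hx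
      rw [hqZ'.2]
      exact hnn x hx
    have hfq : fderiv ℝ w q = 0 := hqmin.fderiv_eq_zero
    -- inward direction
    set v : EuclideanSpace ℝ (Fin N) := s⁻¹ • (y - q) with hvdef
    set g : ℝ → ℝ := fun t => w (q + t • v) with hgdef
    have hdyq : dist y q = s := hqdist.symm
    have hdistt : ∀ t : ℝ, 0 ≤ t → t ≤ s → dist (q + t • v) y = s - t := by
      intro t ht0 hts
      have hqy : q + t • v - y = (1 - t/s) • (q - y) := by
        rw [hvdef]
        rw [smul_smul, smul_sub, sub_smul, one_smul]
        module
      rw [dist_eq_norm, hqy, norm_smul]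
      have hnorm : ‖q - y‖ = s := by rw [← dist_eq_norm, dist_comm]; exact hdyq
      rw [hnorm, Real.norm_eq_abs, abs_of_nonneg]
      · field_simp
      · have h9 : t/s ≤ 1 := by rw [div_le_one hspos]; exact hts
        linarith
    have hgd : HasDerivAt g 0 0 := by
      have hcurve : HasDerivAt (fun t : ℝ => q + t • v) v 0 := by
        have := ((hasDerivAt_id (0:ℝ)).smul_const v).const_add q
        simpa using this
      have hw' : HasFDerivAt w (0 : EuclideanSpace ℝ (Fin N) →L[ℝ] ℝ)
          ((fun t : ℝ => q + t • v) 0) := by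
        have hd := (hC2 q hqΩ).differentiableAt two_ne_zero
        have := hd.hasFDerivAt
        rw [hfq] at this
        rw [show (fun t : ℝ => q + t • v) 0 = q by simp]
        exact this
      have := hw'.comp_hasDerivAt 0 hcurve
      simp only [ContinuousLinearMap.zero_apply] at this
      exact this
    have hslope : Filter.Tendsto (fun t => g t / t) (nhdsWithin 0 (Ioi 0)) (nhds 0) := by
      have h1 := hasDerivAt_iff_tendsto_slope.mp hgd
      have h2 := h1.mono_left (nhdsWithin_mono _ (fun t (ht : t ∈ Ioi (0:ℝ)) => by
        simpa using ne_of_gt ht))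
      refine h2.congr fun t => ?_
      rw [slope_def_field]
      have hg0 : g 0 = 0 := by
        rw [hgdef]
        simp only []
        rw [show q + (0:ℝ) • v = q by simp]
        exact hqZ'.2
      rw [hg0]
      simp
    have hev : ∀ᶠ t in nhdsWithin (0:ℝ) (Ioi 0), κ * m ≤ g t / t := by
      have hIoo : Ioo (0:ℝ) (s/2) ∈ nhdsWithin (0:ℝ) (Ioi 0) :=
        Ioo_mem_nhdsGT_of_mem (Set.mem_Ico.mpr ⟨le_refl (0:ℝ), by linarith⟩)
      filter_upwards [hIoo] with t ht
      obtain ⟨ht0, hts2⟩ := ht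
      have hd1 : dist (q + t • v) y = s - t := hdistt t (le_of_lt ht0) (by linarith)
      have hb := hbar (q + t • v) (by rw [hd1]; linarith) (by rw [hd1]; linarith)
      rw [hd1] at hb
      have : κ * m * t ≤ g t := by
        have : s - (s - t) = t := by ring
        rw [this] at hb
        exact hb
      rw [le_div_iff₀ ht0]
      linarith [this]
    have hcontra : κ * m ≤ 0 := ge_of_tendsto hslope hev
    nlinarith
  have hPopen : IsOpen P := by
    have h1 : IsOpen (Ω ∩ w ⁻¹' Ioi (0:ℝ)) := hwc.isOpen_inter_preimage hΩo isOpen_Ioi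
    have h2 : P = Ω ∩ w ⁻¹' Ioi (0:ℝ) := by
      ext x
      simp [hPdef, Set.mem_setOf_eq]
    rw [h2]
    exact h1
  by_contra hcon
  push_neg at hcon
  obtain ⟨x₁, hx₁Ω, hx₁⟩ := hcon
  have hx₁P : x₁ ∈ P := ⟨hx₁Ω, lt_of_le_of_ne (hnn x₁ hx₁Ω) (Ne.symm hx₁)⟩
  have hcover : Ω ⊆ Z ∪ P := by
    intro x hx
    rcases eq_or_lt_of_le (hnn x hx) with h | h
    · exact Or.inl ⟨hx, h.symm⟩
    · exact Or.inr ⟨hx, h⟩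
  obtain ⟨x₂, hx₂Ω, hx₂Z, hx₂P⟩ := hΩc Z P hZopen hPopen hcover ⟨p₀, hp₀, hp₀, hp₀0⟩
    ⟨x₁, hx₁Ω, hx₁P⟩
  exact absurd hx₂Z.2 (ne_of_gt hx₂P.2)

end HopfAux

namespace HopfAux
variable {N : ℕ}

lemma coord_dist (i0 : Fin N) (x y : EuclideanSpace ℝ (Fin N)) : |x i0 - y i0| ≤ dist x y := by
  rw [EuclideanSpace.dist_eq]
  have h1 : dist (x i0) (y i0) ^2 ≤ ∑ i, dist (x i) (y i)^2 :=
    Finset.single_le_sum (f := fun i => dist (x i) (y i)^2) (fun i _ => sq_nonneg _)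
      (Finset.mem_univ i0)
  have h2 : |x i0 - y i0| = Real.sqrt (dist (x i0) (y i0) ^2) := by
    rw [Real.sqrt_sq_eq_abs, Real.dist_eq, abs_abs]
  rw [h2]
  exact Real.sqrt_le_sqrt h1

lemma coord_add_smul (i0 : Fin N) (z : EuclideanSpace ℝ (Fin N)) (t : ℝ) :
    (z + t • EuclideanSpace.single i0 (1:ℝ)) i0 = z i0 + t := by
  simp [EuclideanSpace.single_apply]

lemma dist_add_smul (i0 : Fin N) (z : EuclideanSpace ℝ (Fin N)) (t : ℝ) :
    dist (z + t • EuclideanSpace.single i0 (1:ℝ)) z = |t| := by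
  rw [dist_eq_norm, add_sub_cancel_left, norm_smul, EuclideanSpace.norm_single]
  simp

lemma dist_smul_smul (i0 : Fin N) (z : EuclideanSpace ℝ (Fin N)) (t β : ℝ) :
    dist (z + t • EuclideanSpace.single i0 (1:ℝ)) (z + β • EuclideanSpace.single i0 (1:ℝ))
      = |t - β| := by
  rw [dist_eq_norm]
  have h1 : z + t • EuclideanSpace.single i0 (1:ℝ) - (z + β • EuclideanSpace.single i0 (1:ℝ))
      = (t - β) • EuclideanSpace.single i0 (1:ℝ) := by module
  rw [h1, norm_smul, EuclideanSpace.norm_single]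
  simp

set_option maxHeartbeats 1000000 in
lemma main_aux (hN : 1 ≤ N) (i0 : Fin N) (D₁ D₂ : Set (EuclideanSpace ℝ (Fin N)))
    (hD₁open : IsOpen D₁) (hD₁bd : Bornology.IsBounded D₁)
    (hD₂open : IsOpen D₂)
    (h0₁ : (0 : EuclideanSpace ℝ (Fin N)) ∈ D₁)
    (hsub : D₁ ⊆ D₂)
    (R : ℝ) (hR : 0 < R) (hball : ∀ x ∈ closure D₁, ball x R ⊆ D₂)
    (hplus : IsConnected (plusPart i0 D₁))
    (w : EuclideanSpace ℝ (Fin N) → ℝ)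
    (hw0 : ContinuousOn w D₂) (hw2 : ContDiffOn ℝ 2 w (plusPart i0 D₂))
    (hharm : ∀ x ∈ plusPart i0 D₂, lapl w x = 0)
    (hnn : ∀ x ∈ plusPart i0 D₂, 0 ≤ w x)
    (hzero : ∀ x ∈ frontier (plusPart i0 D₂), x i0 = 0 → w x = 0) :
    ∃ C > 0, ∃ M : ℝ, 1 ≤ M ∧ ∀ z ∈ closure (plusPart i0 D₁),
      ∀ x ∈ closure (plusPart i0 D₁), x i0 ≠ 0 →
        (0 < z i0 → w x ≤ M * C * w z / z i0) ∧
        (z i0 = 0 → ∀ d : ℝ,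
          HasDerivWithinAt
            (fun t : ℝ => w (z + t • EuclideanSpace.single i0 (1 : ℝ)))
            d (Ici (0 : ℝ)) 0 →
          w x ≤ M * C * d) := by
  have hcoordcont : Continuous (fun x : EuclideanSpace ℝ (Fin N) => x i0) := by
    have := (EuclideanSpace.proj (𝕜 := ℝ) i0).continuous
    change Continuous _ at this
    exact this
  -- basic facts about K
  set K : Set (EuclideanSpace ℝ (Fin N)) := closure (plusPart i0 D₁) with hKdef
  have hKcpt : IsCompact K :=
    Metric.isCompact_of_isClosed_isBounded isClosed_closure
      ((hD₁bd.subset (fun x hx => hx.1)).closure)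
  have hKne : K.Nonempty := hplus.nonempty.closure
  have hK0 : ∀ x ∈ K, 0 ≤ x i0 := by
    have hcl : IsClosed {x : EuclideanSpace ℝ (Fin N) | 0 ≤ x i0} :=
      isClosed_le continuous_const hcoordcont
    intro x hx
    exact closure_minimal (fun y hy => le_of_lt hy.2) hcl hx
  have hKD₁ : K ⊆ closure D₁ := closure_mono (fun x hx => hx.1)
  have hKD₂ : ∀ x ∈ K, x ∈ D₂ := fun x hx => hball x (hKD₁ hx) (mem_ball_self hR)
  -- plusPart D₂ is open
  have hplusOpen₂ : IsOpen (plusPart i0 D₂) := by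
    have h1 : plusPart i0 D₂ = D₂ ∩ {x | 0 < x i0} := rfl
    rw [h1]
    exact hD₂open.inter (isOpen_lt continuous_const hcoordcont)
  have hC2plus : ∀ x ∈ plusPart i0 D₂, ContDiffAt ℝ 2 w x :=
    fun x hx => (hw2 x hx).contDiffAt (hplusOpen₂.mem_nhds hx)
  -- w vanishes on the hyperplane piece
  have hCoordZero : ∀ x ∈ D₂, x i0 = 0 → w x = 0 := by
    intro x hxD hx0
    apply hzero x _ hx0
    constructor
    · rw [Metric.mem_closure_iff]
      intro ε hε
      obtain ⟨δ, hδ, hδball⟩ := Metric.isOpen_iff.mp hD₂open x hxD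
      refine ⟨x + (min (ε/2) (δ/2)) • EuclideanSpace.single i0 (1:ℝ), ⟨?_, ?_⟩, ?_⟩
      · apply hδball
        rw [mem_ball, dist_add_smul]
        rw [abs_of_pos (by positivity)]
        calc min (ε/2) (δ/2) ≤ δ/2 := min_le_right _ _
        _ < δ := by linarith
      · rw [coord_add_smul, hx0, zero_add]
        positivity
      · rw [dist_comm, dist_add_smul, abs_of_pos (by positivity)]
        calc min (ε/2) (δ/2) ≤ ε/2 := min_le_left _ _
        _ < ε := by linarith
    · intro hint
      have hmem : x ∈ plusPart i0 D₂ := interior_subset hint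
      have h2 := hmem.2
      rw [hx0] at h2
      exact lt_irrefl 0 h2
  have hNonnegD₂ : ∀ x ∈ D₂, 0 ≤ x i0 → 0 ≤ w x := by
    intro x hxD hx0
    rcases eq_or_lt_of_le hx0 with h | h
    · rw [hCoordZero x hxD h.symm]
    · exact hnn x ⟨hxD, h⟩
  -- the connected component
  obtain ⟨p₀, hp₀⟩ := hplus.nonempty
  set Ω : Set (EuclideanSpace ℝ (Fin N)) := connectedComponentIn (plusPart i0 D₂) p₀ with hΩdef
  have hplussub : plusPart i0 D₁ ⊆ plusPart i0 D₂ := fun x hx => ⟨hsub hx.1, hx.2⟩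
  have hΩopen : IsOpen Ω := hplusOpen₂.connectedComponentIn
  have hΩsub : Ω ⊆ plusPart i0 D₂ := connectedComponentIn_subset _ _
  have hΩconn : IsPreconnected Ω := isPreconnected_connectedComponentIn
  have hplus₁Ω : plusPart i0 D₁ ⊆ Ω :=
    hplus.isPreconnected.subset_connectedComponentIn hp₀ hplussub
  -- the segment lemma
  have hseg : ∀ z ∈ K, ∀ y : EuclideanSpace ℝ (Fin N), 0 < y i0 → dist y z < R → y ∈ Ω := by
    intro z hz y hy0 hyR
    obtain ⟨z', hz', hz'd⟩ := Metric.mem_closure_iff.mp hz (R - dist y z) (by linarith)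
    have hSsub : segment ℝ z' y ⊆ plusPart i0 D₂ := by
      rintro x ⟨a, b, ha, hb, hab, rfl⟩
      constructor
      · apply hball z (hKD₁ hz)
        rw [mem_ball, dist_eq_norm]
        have hxz : a • (z' - z) + b • (y - z) = a • z' + b • y - (a + b) • z := by
          module
        rw [hab, one_smul] at hxz
        rw [← hxz]
        have h1 : ‖a • (z' - z) + b • (y - z)‖ ≤ a * ‖z' - z‖ + b * ‖y - z‖ := by
          calc ‖a • (z' - z) + b • (y - z)‖ ≤ ‖a • (z' - z)‖ + ‖b • (y - z)‖ := norm_add_le _ _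
          _ = a * ‖z' - z‖ + b * ‖y - z‖ := by
              rw [norm_smul, norm_smul, Real.norm_eq_abs, Real.norm_eq_abs,
                abs_of_nonneg ha, abs_of_nonneg hb]
        have h2 : ‖z' - z‖ < R := by
          rw [← dist_eq_norm, dist_comm]
          linarith [dist_nonneg (x := y) (y := z)]
        have h3 : ‖y - z‖ < R := by rw [← dist_eq_norm]; exact hyR
        have hmax : max ‖z' - z‖ ‖y - z‖ < R := max_lt h2 h3
        have h4 : a * ‖z' - z‖ ≤ a * max ‖z' - z‖ ‖y - z‖ :=
          mul_le_mul_of_nonneg_left (le_max_left _ _) ha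
        have h5 : b * ‖y - z‖ ≤ b * max ‖z' - z‖ ‖y - z‖ :=
          mul_le_mul_of_nonneg_left (le_max_right _ _) hb
        have h6 : a * max ‖z' - z‖ ‖y - z‖ + b * max ‖z' - z‖ ‖y - z‖
            = max ‖z' - z‖ ‖y - z‖ := by rw [← add_mul, hab, one_mul]
        calc ‖a • (z' - z) + b • (y - z)‖ ≤ a * ‖z' - z‖ + b * ‖y - z‖ := h1
        _ ≤ max ‖z' - z‖ ‖y - z‖ := by linarith
        _ < R := hmax
      · have hcoord : (a • z' + b • y) i0 = a * z' i0 + b * y i0 := by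
          simp
        rw [hcoord]
        rcases eq_or_lt_of_le ha with h | h
        · have hb1 : b = 1 := by linarith
          rw [← h, hb1]
          simpa using hy0
        · nlinarith [mul_pos h hz'.2, mul_nonneg hb (le_of_lt hy0)]
    have hsegconn : IsPreconnected (segment ℝ z' y) := (convex_segment z' y).isPreconnected
    have hz'Ω : z' ∈ Ω := hplus₁Ω hz'
    have hcomp : segment ℝ z' y ⊆ connectedComponentIn (plusPart i0 D₂) z' :=
      hsegconn.subset_connectedComponentIn (left_mem_segment ℝ z' y) hSsub
    have heq : Ω = connectedComponentIn (plusPart i0 D₂) z' := connectedComponentIn_eq hz'Ω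
    rw [heq]
    exact hcomp (right_mem_segment ℝ z' y)
  -- closure of Ω intersected with plusPart D₂ is Ω
  have hclosΩ : ∀ x, x ∈ closure Ω → x ∈ plusPart i0 D₂ → x ∈ Ω := by
    intro x hxcl hxp
    obtain ⟨ε, hε, hεball⟩ := Metric.isOpen_iff.mp hplusOpen₂ x hxp
    obtain ⟨u, hu, hud⟩ := Metric.mem_closure_iff.mp hxcl ε hε
    have hballconn : IsPreconnected (ball x ε) := (convex_ball x ε).isPreconnected
    have hsub2 : ball x ε ⊆ connectedComponentIn (plusPart i0 D₂) u :=
      hballconn.subset_connectedComponentIn (by rwa [mem_ball, dist_comm]) hεball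
    have heq : Ω = connectedComponentIn (plusPart i0 D₂) u := connectedComponentIn_eq hu
    rw [heq]
    exact hsub2 (mem_ball_self hε)
  -- 0 ∈ K
  have h0K : (0 : EuclideanSpace ℝ (Fin N)) ∈ K := by
    rw [hKdef, Metric.mem_closure_iff]
    intro ε hε
    obtain ⟨δ, hδ, hδball⟩ := Metric.isOpen_iff.mp hD₁open 0 h0₁
    set t : ℝ := min (ε/2) (δ/2) with htdef
    have ht : 0 < t := by positivity
    refine ⟨t • EuclideanSpace.single i0 (1:ℝ), ⟨?_, ?_⟩, ?_⟩
    · apply hδball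
      rw [mem_ball, dist_eq_norm, sub_zero, norm_smul, EuclideanSpace.norm_single]
      simp only [norm_one, mul_one, Real.norm_eq_abs]
      rw [abs_of_pos ht]
      calc t ≤ δ/2 := min_le_right _ _
      _ < δ := by linarith
    · have h7 : (t • EuclideanSpace.single i0 (1:ℝ)) i0 = t := by
        simp [EuclideanSpace.single_apply]
      rw [h7]; exact ht
    · rw [dist_comm, dist_eq_norm, sub_zero, norm_smul, EuclideanSpace.norm_single]
      simp only [norm_one, mul_one, Real.norm_eq_abs]
      rw [abs_of_pos ht]
      calc t ≤ ε/2 := min_le_left _ _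
      _ < ε := by linarith
  set ρ : ℝ := R/3 with hρdef
  have hρ : 0 < ρ := by rw [hρdef]; linarith
  by_cases hvanish : ∃ p ∈ Ω, w p = 0
  · -- w vanishes identically on Ω
    obtain ⟨p, hpΩ, hp0⟩ := hvanish
    have hΩzero : ∀ x ∈ Ω, w x = 0 :=
      strong_max hN hΩopen hΩconn (fun x hx => hC2plus x (hΩsub hx))
        (fun x hx => hharm x (hΩsub hx)) (fun x hx => hnn x (hΩsub hx)) hpΩ hp0
    refine ⟨1, one_pos, 1, le_refl 1, ?_⟩
    intro z hz x hx hx0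
    have hxpos : 0 < x i0 := lt_of_le_of_ne (hK0 x hx) (Ne.symm hx0)
    have hxΩ : x ∈ Ω := hseg x hx x hxpos (by rw [dist_self]; exact hR)
    have hwx : w x = 0 := hΩzero x hxΩ
    constructor
    · intro hz0
      have hzΩ : z ∈ Ω := hseg z hz z hz0 (by rw [dist_self]; exact hR)
      rw [hwx, hΩzero z hzΩ]
      simp
    · intro hz0 d hd
      have hgzero : ∀ t : ℝ, 0 < t → t < R →
          w (z + t • EuclideanSpace.single i0 (1:ℝ)) = 0 := by
        intro t ht0 htR
        apply hΩzero
        apply hseg z hz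
        · rw [coord_add_smul, hz0, zero_add]; exact ht0
        · rw [dist_add_smul, abs_of_pos ht0]; exact htR
      have hg00 : w (z + (0:ℝ) • EuclideanSpace.single i0 (1:ℝ)) = 0 := by
        rw [zero_smul, add_zero]
        exact hCoordZero z (hKD₂ z hz) hz0
      have hconst : HasDerivWithinAt
          (fun t : ℝ => w (z + t • EuclideanSpace.single i0 (1 : ℝ))) 0 (Ici (0:ℝ)) 0 := by
        have hc : HasDerivWithinAt (fun _ : ℝ => (0:ℝ)) 0 (Ici (0:ℝ)) (0:ℝ) :=
          hasDerivWithinAt_const _ _ _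
        apply hc.congr_of_eventuallyEq
        · have hIco : Ico (0:ℝ) R ∈ nhdsWithin (0:ℝ) (Ici 0) :=
            Ico_mem_nhdsGE_of_mem ⟨le_refl 0, hR⟩
          filter_upwards [hIco] with t ht
          rcases eq_or_lt_of_le ht.1 with h | h
          · rw [← h]; exact hg00
          · exact hgzero t h ht.2
        · exact hg00
      have hu : UniqueDiffWithinAt ℝ (Ici (0:ℝ)) 0 := uniqueDiffOn_Ici 0 0 self_mem_Ici
      have e1 := hd.derivWithin hu
      have e2 := hconst.derivWithin hu
      have hd0 : d = 0 := by rw [← e1, e2]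
      rw [hwx, hd0]
      simp
  · -- w is strictly positive on Ω
    push_neg at hvanish
    have hΩpos : ∀ x ∈ Ω, 0 < w x :=
      fun x hx => lt_of_le_of_ne (hnn x (hΩsub hx)) (Ne.symm (hvanish x hx))
    -- the compact set T
    set T : Set (EuclideanSpace ℝ (Fin N)) :=
      ({x | infDist x K ≤ 3*ρ/2} ∩ {x | ρ/2 ≤ x i0}) ∩ closure Ω with hTdef
    have hTclosed : IsClosed T :=
      ((isClosed_le (continuous_infDist_pt K) continuous_const).inter
        (isClosed_le continuous_const hcoordcont)).inter isClosed_closure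
    obtain ⟨rK, hrK⟩ := hKcpt.isBounded.subset_closedBall 0
    have hTbd : Bornology.IsBounded T := by
      apply (Metric.isBounded_closedBall
        (x := (0:EuclideanSpace ℝ (Fin N))) (r := rK + 3*ρ/2)).subset
      rintro x ⟨⟨h1, h2⟩, h3⟩
      obtain ⟨zx, hzx, hzxd⟩ := hKcpt.exists_infDist_eq_dist hKne x
      rw [mem_closedBall]
      calc dist x 0 ≤ dist x zx + dist zx 0 := dist_triangle _ _ _
      _ ≤ 3*ρ/2 + rK := add_le_add (by rw [← hzxd]; exact h1) (mem_closedBall.mp (hrK hzx))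
      _ = rK + 3*ρ/2 := by ring
    have hTcpt : IsCompact T := Metric.isCompact_of_isClosed_isBounded hTclosed hTbd
    have hTsubΩ : T ⊆ Ω := by
      rintro x ⟨⟨h1, h2⟩, h3⟩
      have h1' : infDist x K ≤ 3*ρ/2 := h1
      have h2' : ρ/2 ≤ x i0 := h2
      apply hclosΩ x h3
      obtain ⟨zx, hzx, hzxd⟩ := hKcpt.exists_infDist_eq_dist hKne x
      constructor
      · apply hball zx (hKD₁ hzx)
        rw [mem_ball]
        have hd1 : dist x zx ≤ 3*ρ/2 := by rw [← hzxd]; exact h1'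
        have hd2 : 3*ρ/2 < R := by rw [hρdef]; linarith
        linarith
      · have h5 : (0:ℝ) < ρ/2 := by linarith
        exact lt_of_lt_of_le h5 h2'
    have hTne : T.Nonempty := by
      refine ⟨ρ • EuclideanSpace.single i0 (1:ℝ), ⟨?_, ?_⟩, ?_⟩
      · have h1 : infDist (ρ • EuclideanSpace.single i0 (1:ℝ)) K
            ≤ dist (ρ • EuclideanSpace.single i0 (1:ℝ)) 0 := infDist_le_dist_of_mem h0K
        have h2 : dist (ρ • EuclideanSpace.single i0 (1:ℝ))
            (0:EuclideanSpace ℝ (Fin N)) = ρ := by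
          rw [dist_eq_norm, sub_zero, norm_smul, EuclideanSpace.norm_single]
          simp only [norm_one, mul_one, Real.norm_eq_abs]
          exact abs_of_pos hρ
        rw [h2] at h1
        show infDist _ K ≤ 3*ρ/2
        linarith
      · show ρ/2 ≤ (ρ • EuclideanSpace.single i0 (1:ℝ)) i0
        have h3 : (ρ • EuclideanSpace.single i0 (1:ℝ)) i0 = ρ := by
          simp [EuclideanSpace.single_apply]
        rw [h3]; linarith
      · apply subset_closure
        apply hseg 0 h0K
        · have h3 : (ρ • EuclideanSpace.single i0 (1:ℝ)) i0 = ρ := by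
            simp [EuclideanSpace.single_apply]
          rw [h3]; exact hρ
        · rw [dist_eq_norm, sub_zero, norm_smul, EuclideanSpace.norm_single]
          simp only [norm_one, mul_one, Real.norm_eq_abs]
          rw [abs_of_pos hρ, hρdef]; linarith
    obtain ⟨xm, hxmT, hxmmin⟩ := hTcpt.exists_isMinOn hTne
      (hw0.mono (fun y hy => (hΩsub (hTsubΩ hy)).1))
    set m : ℝ := w xm with hmdef
    have hmpos : 0 < m := hΩpos xm (hTsubΩ hxmT)
    have hminT : ∀ y ∈ T, m ≤ w y := fun y hy => isMinOn_iff.mp hxmmin y hy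
    obtain ⟨xS, hxSK, hxSmax⟩ := hKcpt.exists_isMaxOn hKne (hw0.mono (fun y hy => hKD₂ y hy))
    set S : ℝ := w xS with hSdef
    have hS0 : 0 ≤ S := hNonnegD₂ xS (hKD₂ xS hxSK) (hK0 xS hxSK)
    have hmaxK : ∀ y ∈ K, w y ≤ S := fun y hy => isMaxOn_iff.mp hxSmax y hy
    set B : ℝ := rK + 1 with hBdef
    have hB : 0 < B := by
      have h1 : (0:EuclideanSpace ℝ (Fin N)) ∈ closedBall 0 rK := hrK h0K
      rw [mem_closedBall, dist_self] at h1
      rw [hBdef]; linarith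
    have hKB : ∀ z ∈ K, z i0 ≤ B := by
      intro z hz
      have h1 := coord_dist i0 z 0
      have h2 : (0:EuclideanSpace ℝ (Fin N)) i0 = 0 := rfl
      rw [h2, sub_zero] at h1
      have h3 : dist z 0 ≤ rK := mem_closedBall.mp (hrK hz)
      have h4 := le_abs_self (z i0)
      rw [hBdef]; linarith
    obtain ⟨κ, hκ, hbar⟩ := hopf_barrier hN hρ
    have hHopf : ∀ z ∈ K, z i0 < ρ → ∀ y : EuclideanSpace ℝ (Fin N),
        dist y (z + (ρ - z i0) • EuclideanSpace.single i0 (1:ℝ)) < ρ →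
        ρ/2 < dist y (z + (ρ - z i0) • EuclideanSpace.single i0 (1:ℝ)) →
        κ * m * (ρ - dist y (z + (ρ - z i0) • EuclideanSpace.single i0 (1:ℝ))) ≤ w y := by
      intro z hzK hzρ
      set β : ℝ := ρ - z i0 with hβdef
      have hz0 : 0 ≤ z i0 := hK0 z hzK
      have hβpos : 0 < β := by rw [hβdef]; linarith
      have hβρ : β ≤ ρ := by rw [hβdef]; linarith
      set c : EuclideanSpace ℝ (Fin N) := z + β • EuclideanSpace.single i0 (1:ℝ) with hcdef
      have hci0 : c i0 = ρ := by rw [hcdef, coord_add_smul, hβdef]; ring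
      have hdcz : dist c z = β := by rw [hcdef, dist_add_smul, abs_of_pos hβpos]
      have hyD₂ : ∀ y, dist y c ≤ ρ → y ∈ D₂ := by
        intro y hy
        apply hball z (hKD₁ hzK)
        rw [mem_ball]
        have h9 : dist y z ≤ dist y c + dist c z := dist_triangle _ _ _
        rw [hdcz] at h9
        have h10 : 2*ρ < R := by rw [hρdef]; linarith
        linarith
      have hycoord : ∀ y, ρ - dist y c ≤ y i0 := by
        intro y
        have h1 := coord_dist i0 y c
        rw [hci0] at h1
        have h2 := (abs_le.mp h1).1
        linarith
      apply hbar c m w (le_of_lt hmpos)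
      · apply hw0.mono
        intro y hy
        exact hyD₂ y (mem_closedBall.mp hy.1)
      · intro y h1 h2
        apply hC2plus
        refine ⟨hyD₂ y (le_of_lt h1), ?_⟩
        have := hycoord y
        linarith
      · intro y h1 h2
        apply hharm
        refine ⟨hyD₂ y (le_of_lt h1), ?_⟩
        have := hycoord y
        linarith
      · intro y h1 h2
        exact hNonnegD₂ y (hyD₂ y h1) (by linarith [hycoord y])
      · intro y hy
        apply hminT
        refine ⟨⟨?_, ?_⟩, ?_⟩
        · have h1 : infDist y K ≤ dist y z := infDist_le_dist_of_mem hzK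
          have h2 : dist y z ≤ dist y c + dist c z := dist_triangle _ _ _
          rw [hdcz, hy] at h2
          show infDist y K ≤ 3*ρ/2
          linarith
        · have h3 := hycoord y
          rw [hy] at h3
          show ρ/2 ≤ y i0
          linarith
        · apply subset_closure
          apply hseg z hzK
          · have h3 := hycoord y
            rw [hy] at h3
            linarith
          · have h2 : dist y z ≤ dist y c + dist c z := dist_triangle _ _ _
            rw [hdcz, hy] at h2
            have h10 : 3*ρ/2 < R := by rw [hρdef]; linarith
            linarith
    set L : ℝ := min (κ * m) (m / B) with hLdef
    have hL : 0 < L := lt_min (by positivity) (by positivity)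
    refine ⟨(S + 1)/L, by positivity, 1, le_refl 1, ?_⟩
    intro z hzK x hxK hx0
    have hxpos : 0 < x i0 := lt_of_le_of_ne (hK0 x hxK) (Ne.symm hx0)
    have hwxS : w x ≤ S := hmaxK x hxK
    have hCL : (S + 1)/L * L = S + 1 := div_mul_cancel₀ _ (ne_of_gt hL)
    constructor
    · intro hz0
      have hkey : L ≤ w z / z i0 := by
        rcases lt_or_ge (z i0) (ρ/2) with hc | hc
        · have hzρ : z i0 < ρ := by linarith
          have hdzc : dist z (z + (ρ - z i0) • EuclideanSpace.single i0 (1:ℝ)) = ρ - z i0 := by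
            rw [dist_comm, dist_add_smul]
            rw [abs_of_pos (by linarith)]
          have hb := hHopf z hzK hzρ z (by rw [hdzc]; linarith) (by rw [hdzc]; linarith)
          rw [hdzc] at hb
          have hb2 : κ * m * z i0 ≤ w z := by
            have h9 : ρ - (ρ - z i0) = z i0 := by ring
            rwa [h9] at hb
          have h10 : κ * m ≤ w z / z i0 := (le_div_iff₀ hz0).mpr hb2
          exact le_trans (min_le_left _ _) h10
        · have hzT : z ∈ T := ⟨⟨show infDist z K ≤ 3*ρ/2 by
              rw [infDist_zero_of_mem hzK]; positivity,
            show ρ/2 ≤ z i0 from hc⟩,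
            subset_closure (hseg z hzK z hz0 (by rw [dist_self]; exact hR))⟩
          have hmw : m ≤ w z := hminT z hzT
          have h1 : m / B ≤ w z / z i0 :=
            div_le_div₀ (le_trans (le_of_lt hmpos) hmw) hmw hz0 (hKB z hzK)
          exact le_trans (min_le_right _ _) h1
      have h2 : (S+1)/L * L ≤ (S+1)/L * (w z / z i0) :=
        mul_le_mul_of_nonneg_left hkey (by positivity)
      rw [hCL] at h2
      calc w x ≤ S := hwxS
      _ ≤ S + 1 := by linarith
      _ ≤ (S+1)/L * (w z / z i0) := h2
      _ = 1 * ((S+1)/L) * w z / z i0 := by ring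
    · intro hz0 d hd
      have hzρ : z i0 < ρ := by rw [hz0]; exact hρ
      have hwz0 : w z = 0 := hCoordZero z (hKD₂ z hzK) hz0
      have hslope := hasDerivWithinAt_iff_tendsto_slope.mp hd
      have hIci : (Ici (0:ℝ)) \ {0} = Ioi 0 := by
        ext t
        simp only [mem_diff, mem_Ici, mem_singleton_iff, mem_Ioi]
        constructor
        · rintro ⟨h1, h2⟩; exact lt_of_le_of_ne h1 (Ne.symm h2)
        · intro h; exact ⟨le_of_lt h, ne_of_gt h⟩
      rw [hIci] at hslope
      have hev : ∀ᶠ t in nhdsWithin (0:ℝ) (Ioi 0), κ * m ≤ slope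
          (fun t : ℝ => w (z + t • EuclideanSpace.single i0 (1 : ℝ))) 0 t := by
        have hIoo : Ioo (0:ℝ) (ρ/2) ∈ nhdsWithin (0:ℝ) (Ioi 0) :=
          Ioo_mem_nhdsGT_of_mem ⟨le_refl 0, by linarith⟩
        filter_upwards [hIoo] with t ht
        obtain ⟨ht0, htρ⟩ := ht
        have hdist : dist (z + t • EuclideanSpace.single i0 (1:ℝ))
            (z + (ρ - z i0) • EuclideanSpace.single i0 (1:ℝ)) = ρ - t := by
          rw [dist_smul_smul, hz0, sub_zero]
          rw [abs_of_neg (by linarith)]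
          ring
        have hb := hHopf z hzK hzρ (z + t • EuclideanSpace.single i0 (1:ℝ))
          (by rw [hdist]; linarith) (by rw [hdist]; linarith)
        rw [hdist] at hb
        have hb2 : κ * m * t ≤ w (z + t • EuclideanSpace.single i0 (1:ℝ)) := by
          have h9 : ρ - (ρ - t) = t := by ring
          rwa [h9] at hb
        have hgoal : slope (fun t : ℝ => w (z + t • EuclideanSpace.single i0 (1:ℝ))) 0 t
            = w (z + t • EuclideanSpace.single i0 (1:ℝ)) / t := by
          rw [slope_def_field]
          rw [show z + (0:ℝ) • EuclideanSpace.single i0 (1:ℝ) = z from by rw [zero_smul, add_zero]]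
          rw [hwz0, sub_zero, sub_zero]
        rw [hgoal, le_div_iff₀ ht0]
        exact hb2
      have hκd : κ * m ≤ d := ge_of_tendsto hslope hev
      have hLd : L ≤ d := le_trans (min_le_left _ _) hκd
      have h2 : (S+1)/L * L ≤ (S+1)/L * d := mul_le_mul_of_nonneg_left hLd (by positivity)
      rw [hCL] at h2
      calc w x ≤ S := hwxS
      _ ≤ S + 1 := by linarith
      _ ≤ (S+1)/L * d := h2
      _ = 1 * ((S+1)/L) * d := by ring



end HopfAux


/-- Lemma 3.2: Harnack-type estimate on all of `D₁⁺ \ {x₁ = 0}` for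
nonnegative harmonic functions vanishing on `{x₁ = 0}`. -/
theorem harnack_estimate_full (N : ℕ) (hN : 2 ≤ N)
    (D₁ D₂ : Set (EuclideanSpace ℝ (Fin N)))
    (hD₁open : IsOpen D₁) (hD₁conn : IsConnected D₁) (hD₁bd : Bornology.IsBounded D₁)
    (hD₂open : IsOpen D₂) (hD₂conn : IsConnected D₂) (hD₂bd : Bornology.IsBounded D₂)
    (h0₁ : (0 : EuclideanSpace ℝ (Fin N)) ∈ D₁) (h0₂ : (0 : EuclideanSpace ℝ (Fin N)) ∈ D₂)
    (hsub : D₁ ⊆ D₂)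
    (R : ℝ) (hR : 0 < R) (hball : ∀ x ∈ closure D₁, ball x R ⊆ D₂)
    (hplus : IsConnected (plusPart ⟨0, by omega⟩ D₁))
    (w : EuclideanSpace ℝ (Fin N) → ℝ)
    (hw0 : ContinuousOn w D₂) (hw2 : ContDiffOn ℝ 2 w (plusPart ⟨0, by omega⟩ D₂))
    (hharm : ∀ x ∈ plusPart ⟨0, by omega⟩ D₂, lapl w x = 0)
    (hnn : ∀ x ∈ plusPart ⟨0, by omega⟩ D₂, 0 ≤ w x)
    (hzero : ∀ x ∈ frontier (plusPart ⟨0, by omega⟩ D₂), x ⟨0, by omega⟩ = 0 → w x = 0) :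
    ∃ C > 0, ∃ M : ℝ, 1 ≤ M ∧ ∀ z ∈ closure (plusPart ⟨0, by omega⟩ D₁),
      ∀ x ∈ closure (plusPart ⟨0, by omega⟩ D₁), x ⟨0, by omega⟩ ≠ 0 →
        (0 < z ⟨0, by omega⟩ → w x ≤ M * C * w z / z ⟨0, by omega⟩) ∧
        (z ⟨0, by omega⟩ = 0 → ∀ d : ℝ,
          HasDerivWithinAt
            (fun t : ℝ => w (z + t • EuclideanSpace.single ⟨0, by omega⟩ (1 : ℝ)))
            d (Ici (0 : ℝ)) 0 →
          w x ≤ M * C * d) := by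
  have hN1 : 1 ≤ N := by omega
  exact HopfAux.main_aux hN1 ⟨0, by omega⟩ D₁ D₂ hD₁open hD₁bd hD₂open h0₁ hsub R hR hball
    hplus w hw0 hw2 hharm hnn hzero
end

section
/- Let N ≥ 2, let G be a bounded domain in ℝ^N with boundary ∂G of class C^{2,α} (0 < α ≤ 1), let R > 0, set Ω = G + B_R, and let u ∈ C²(Ω) ∩ C⁰(cl Ω) solve −Δu = 1 in Ω with u = 0 on ∂Ω. Then there exists a positive constant K, depending only on the diameter of G and the C^{2,α}-regularity of ∂G, such that K·dist(x, ∂G) + min_{∂G} u ≤ u(x) for every x in the closure of G. -/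
set_option maxHeartbeats 1000000


open Metric Set
open scoped Pointwise NNReal

section AuxiliaryLemmas

variable {E : Type*} [NormedAddCommGroup E] [NormedSpace ℝ E]

theorem second_deriv_nonneg_of_isLocalMin' {h : E → ℝ} {z : E} (v : E)
    (hh : ContDiffAt ℝ 2 h z) (hmin : IsLocalMin h z) :
    0 ≤ fderiv ℝ (fun y => fderiv ℝ h y v) z v := by
  by_contra hq
  push_neg at hq
  obtain ⟨U₀, hU₀, hC2⟩ := hh.contDiffOn (m := 2) le_rfl (by simp)
  obtain ⟨U, hUsub, hUopen, hzU⟩ := _root_.mem_nhds_iff.1 hU₀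
  have hC2U : ContDiffOn ℝ 2 h U := hC2.mono hUsub
  have hF : ContDiffOn ℝ 1 (fderiv ℝ h) U :=
    hC2U.fderiv_of_isOpen hUopen (by norm_num)
  set G₁ : E → ℝ := fun y => fderiv ℝ h y v with hG₁
  have hG₁C1 : ContDiffOn ℝ 1 G₁ U :=
    (ContinuousLinearMap.apply ℝ ℝ v).contDiff.comp_contDiffOn hF
  have hG₁diff : ∀ y ∈ U, DifferentiableAt ℝ G₁ y := fun y hy =>
    (hG₁C1.differentiableOn one_ne_zero).differentiableAt (hUopen.mem_nhds hy)
  have hcont : ContinuousOn (fun y => fderiv ℝ G₁ y v) U := by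
    have h1 : ContinuousOn (fderiv ℝ G₁) U :=
      hG₁C1.continuousOn_fderiv_of_isOpen hUopen le_rfl
    exact ((ContinuousLinearMap.apply ℝ ℝ v).continuous.comp_continuousOn h1)
  have hneg : ∀ᶠ y in nhds z, fderiv ℝ G₁ y v < 0 := by
    have : ContinuousAt (fun y => fderiv ℝ G₁ y v) z :=
      hcont.continuousAt (hUopen.mem_nhds hzU)
    exact this.eventually_lt continuousAt_const hq
  have hev : ∀ᶠ y in nhds z, fderiv ℝ G₁ y v < 0 ∧ y ∈ U ∧ h z ≤ h y :=
    hneg.and ((hUopen.eventually_mem hzU).and hmin)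
  obtain ⟨ε, hε, hball⟩ := Metric.eventually_nhds_iff_ball.1 hev
  set c : ℝ := ‖v‖ + 1 with hc
  have hcpos : 0 < c := by positivity
  set ε' : ℝ := ε / c with hε'
  have hε'pos : 0 < ε' := by positivity
  have hmem : ∀ t : ℝ, |t| < ε' → z + t • v ∈ ball z ε := by
    intro t ht
    have : ‖t • v‖ ≤ |t| * c := by
      rw [norm_smul, Real.norm_eq_abs]
      nlinarith [norm_nonneg v, abs_nonneg t]
    have h2 : |t| * c < ε := (lt_div_iff₀ hcpos).1 ht
    simp only [mem_ball, dist_eq_norm]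
    rw [add_sub_cancel_left]
    linarith
  set φ : ℝ → ℝ := fun t => G₁ (z + t • v) with hφdef
  set γ : ℝ → ℝ := fun t => h (z + t • v) with hγdef
  have hline : ∀ t : ℝ, HasDerivAt (fun s : ℝ => z + s • v) v t := by
    intro t
    simpa using ((hasDerivAt_id t).smul_const v).const_add z
  have hφd : ∀ t : ℝ, |t| < ε' → HasDerivAt φ (fderiv ℝ G₁ (z + t • v) v) t := by
    intro t ht
    have hy := hmem t ht
    have hdG := hG₁diff _ (hball _ hy).2.1
    exact hdG.hasFDerivAt.comp_hasDerivAt t (hline t)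
  have hγd : ∀ t : ℝ, |t| < ε' → HasDerivAt γ (φ t) t := by
    intro t ht
    have hy := hmem t ht
    have hdh : DifferentiableAt ℝ h (z + t • v) :=
      (hC2U.differentiableOn two_ne_zero).differentiableAt
        (hUopen.mem_nhds (hball _ hy).2.1)
    exact hdh.hasFDerivAt.comp_hasDerivAt t (hline t)
  have hφ0 : φ 0 = 0 := by
    simp [hφdef, hG₁, hmin.fderiv_eq_zero]
  set t₁ : ℝ := ε' / 2 with ht₁
  have ht₁pos : 0 < t₁ := by positivity
  have habs : ∀ t : ℝ, t ∈ Icc (0:ℝ) t₁ → |t| < ε' := by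
    intro t ⟨h0, h1⟩
    rw [abs_of_nonneg h0]; linarith
  have hφanti : StrictAntiOn φ (Icc 0 t₁) := by
    apply strictAntiOn_of_deriv_neg (convex_Icc 0 t₁)
    · intro t ht
      exact ((hφd t (habs t ht)).continuousAt).continuousWithinAt
    · intro t ht
      rw [interior_Icc] at ht
      have habs' : |t| < ε' := habs t ⟨le_of_lt ht.1, le_of_lt ht.2⟩
      rw [(hφd t habs').deriv]
      exact (hball _ (hmem t habs')).1
  have hφneg : ∀ t : ℝ, t ∈ Ioc (0:ℝ) t₁ → φ t < 0 := by
    intro t ⟨h0, h1⟩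
    have := hφanti ⟨le_rfl, le_of_lt ht₁pos⟩ ⟨le_of_lt h0, h1⟩ h0
    linarith [hφ0]
  have hγanti : StrictAntiOn γ (Icc 0 t₁) := by
    apply strictAntiOn_of_deriv_neg (convex_Icc 0 t₁)
    · intro t ht
      exact ((hγd t (habs t ht)).continuousAt).continuousWithinAt
    · intro t ht
      rw [interior_Icc] at ht
      have habs' : |t| < ε' := habs t ⟨le_of_lt ht.1, le_of_lt ht.2⟩
      rw [(hγd t habs').deriv]
      exact hφneg t ⟨ht.1, le_of_lt ht.2⟩
  have h1 : γ t₁ < γ 0 :=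
    hγanti ⟨le_rfl, le_of_lt ht₁pos⟩ ⟨le_of_lt ht₁pos, le_rfl⟩ ht₁pos
  have h2 : h z ≤ γ t₁ := by
    have habs' : |t₁| < ε' := habs t₁ ⟨le_of_lt ht₁pos, le_rfl⟩
    exact (hball _ (hmem t₁ habs')).2.2
  have h3 : γ 0 = h z := by simp [hγdef]
  linarith




theorem fderiv_dir_diffAt {U : Set (EuclideanSpace ℝ (Fin N))} (hU : IsOpen U)
    {x : EuclideanSpace ℝ (Fin N)} (hx : x ∈ U) {u : EuclideanSpace ℝ (Fin N) → ℝ}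
    (hu : ContDiffOn ℝ 2 u U) (e : EuclideanSpace ℝ (Fin N)) :
    DifferentiableAt ℝ (fun y => fderiv ℝ u y e) x := by
  have h1 : ContDiffOn ℝ 1 (fderiv ℝ u) U := hu.fderiv_of_isOpen hU (by norm_num)
  have h2 : ContDiffOn ℝ 1 (fun y => fderiv ℝ u y e) U :=
    (ContinuousLinearMap.apply ℝ ℝ e).contDiff.comp_contDiffOn h1
  exact (h2.differentiableOn one_ne_zero).differentiableAt (hU.mem_nhds hx)

theorem lapl_add {U : Set (EuclideanSpace ℝ (Fin N))} (hU : IsOpen U)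
    {x : EuclideanSpace ℝ (Fin N)} (hx : x ∈ U) {u v : EuclideanSpace ℝ (Fin N) → ℝ}
    (hu : ContDiffOn ℝ 2 u U) (hv : ContDiffOn ℝ 2 v U) :
    lapl (fun y => u y + v y) x = lapl u x + lapl v x := by
  unfold lapl
  rw [← Finset.sum_add_distrib]
  refine Finset.sum_congr rfl fun i _ => ?_
  set e := EuclideanSpace.single i (1:ℝ)
  have hev : (fun y => fderiv ℝ (fun w => u w + v w) y e)
      =ᶠ[nhds x] (fun y => fderiv ℝ u y e + fderiv ℝ v y e) := by
    filter_upwards [hU.mem_nhds hx] with y hy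
    rw [fderiv_fun_add ((hu.differentiableOn two_ne_zero).differentiableAt (hU.mem_nhds hy))
      ((hv.differentiableOn two_ne_zero).differentiableAt (hU.mem_nhds hy))]
    rfl
  rw [hev.fderiv_eq, fderiv_fun_add (fderiv_dir_diffAt hU hx hu e) (fderiv_dir_diffAt hU hx hv e)]
  rfl

theorem lapl_const_mul {U : Set (EuclideanSpace ℝ (Fin N))} (hU : IsOpen U)
    {x : EuclideanSpace ℝ (Fin N)} (hx : x ∈ U) {u : EuclideanSpace ℝ (Fin N) → ℝ}
    (hu : ContDiffOn ℝ 2 u U) (c : ℝ) :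
    lapl (fun y => c * u y) x = c * lapl u x := by
  unfold lapl
  rw [Finset.mul_sum]
  refine Finset.sum_congr rfl fun i _ => ?_
  set e := EuclideanSpace.single i (1:ℝ)
  have hev : (fun y => fderiv ℝ (fun w => c * u w) y e)
      =ᶠ[nhds x] (fun y => c * fderiv ℝ u y e) := by
    filter_upwards [hU.mem_nhds hx] with y hy
    rw [fderiv_const_mul ((hu.differentiableOn two_ne_zero).differentiableAt (hU.mem_nhds hy)) c]
    rfl
  rw [hev.fderiv_eq, fderiv_const_mul (fderiv_dir_diffAt hU hx hu e) c]
  rfl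

theorem lapl_sub_const {x : EuclideanSpace ℝ (Fin N)} (u : EuclideanSpace ℝ (Fin N) → ℝ)
    (m : ℝ) : lapl (fun y => u y - m) x = lapl u x := by
  unfold lapl
  refine Finset.sum_congr rfl fun i _ => ?_
  have : (fun y => fderiv ℝ (fun z => u z - m) y (EuclideanSpace.single i (1:ℝ)))
      = fun y => fderiv ℝ u y (EuclideanSpace.single i (1:ℝ)) := by
    funext y
    rw [fderiv_sub_const]
  rw [this]

theorem lapl_continuous {f : EuclideanSpace ℝ (Fin N) → ℝ} (hf : ContDiff ℝ 2 f) :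
    Continuous (lapl f) := by
  unfold lapl
  refine continuous_finset_sum _ fun i _ => ?_
  set e := EuclideanSpace.single i (1:ℝ)
  have h1 : ContDiff ℝ 1 (fun y => fderiv ℝ f y e) :=
    (ContinuousLinearMap.apply ℝ ℝ e).contDiff.comp (hf.fderiv_right (by norm_num))
  exact (ContinuousLinearMap.apply ℝ ℝ e).continuous.comp (h1.continuous_fderiv one_ne_zero)


theorem min_principle {N : ℕ} {U V : Set (EuclideanSpace ℝ (Fin N))}
    (hUopen : IsOpen U) (hVopen : IsOpen V) (hVb : Bornology.IsBounded V)
    (hVU : closure V ⊆ U) {h : EuclideanSpace ℝ (Fin N) → ℝ}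
    (hC2 : ContDiffOn ℝ 2 h U) (hlap : ∀ x ∈ V, lapl h x < 0) :
    ∀ x ∈ closure V, ∃ y ∈ frontier V, h y ≤ h x := by
  rcases V.eq_empty_or_nonempty with hV | hV
  · simp [hV]
  have hcomp : IsCompact (closure V) := hVb.isCompact_closure
  have hcont : ContinuousOn h (closure V) := (hC2.continuousOn).mono hVU
  obtain ⟨z, hzmem, hzmin⟩ := hcomp.exists_isMinOn hV.closure hcont
  intro x hx
  by_cases hzf : z ∈ frontier V
  · exact ⟨z, hzf, hzmin hx⟩
  · exfalso
    have hzV : z ∈ V := by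
      rcases (closure_eq_self_union_frontier V ▸ hzmem) with h1 | h1
      exacts [h1, absurd h1 hzf]
    have hlocal : IsLocalMin h z :=
      hzmin.isLocalMin (Filter.mem_of_superset (hVopen.mem_nhds hzV) subset_closure)
    have hCA : ContDiffAt ℝ 2 h z :=
      hC2.contDiffAt (hUopen.mem_nhds (hVU (subset_closure hzV)))
    have h0 : 0 ≤ lapl h z :=
      Finset.sum_nonneg fun i _ => second_deriv_nonneg_of_isLocalMin' _ hCA hlocal
    linarith [hlap z hzV]

end AuxiliaryLemmas

/-- Lemma 3.4, first part: lower bound on `u` in terms of the distance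
from `∂G`. -/
theorem lower_bound_dist (N : ℕ) (hN : 2 ≤ N)
    (G : Set (EuclideanSpace ℝ (Fin N)))
    (hGopen : IsOpen G) (hGconn : IsConnected G) (hGbd : Bornology.IsBounded G)
    (α : ℝ) (hα0 : 0 < α) (hα1 : α ≤ 1) (hGreg : C2AlphaBoundary G α)
    (R : ℝ) (hR : 0 < R)
    (Ω : Set (EuclideanSpace ℝ (Fin N))) (hΩ : Ω = G + ball (0 : EuclideanSpace ℝ (Fin N)) R)
    (u : EuclideanSpace ℝ (Fin N) → ℝ)
    (hu2 : ContDiffOn ℝ 2 u Ω) (hu0 : ContinuousOn u (closure Ω))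
    (heq : ∀ x ∈ Ω, lapl u x = -1)
    (hbc : ∀ x ∈ frontier Ω, u x = 0) :
    ∃ K > 0, ∀ x ∈ closure G,
      K * infDist x (frontier G) + sInf (u '' frontier G) ≤ u x := by
  classical
  obtain ⟨f, Kf, hf2, hfHol, hGf, hfront, hgrad⟩ := hGreg
  have hGne : G.Nonempty := hGconn.nonempty
  have hΩopen : IsOpen Ω := by
    rw [hΩ]; exact isOpen_ball.add_left
  have hclG : closure G ⊆ Ω := by
    rw [hΩ]
    intro x hx
    obtain ⟨g, hg, hdist⟩ := Metric.mem_closure_iff.1 hx R hR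
    refine Set.mem_add.2 ⟨g, hg, x - g, ?_, by abel⟩
    rw [mem_ball_zero_iff, ← dist_eq_norm']
    rw [dist_comm]
    exact hdist
  have hGclcomp : IsCompact (closure G) := hGbd.isCompact_closure
  have hfrontsub : frontier G ⊆ closure G := frontier_subset_closure
  have hfrontcomp : IsCompact (frontier G) :=
    hGclcomp.of_isClosed_subset isClosed_frontier hfrontsub
  have hGsubΩ : G ⊆ Ω := subset_closure.trans hclG
  -- frontier G is nonempty
  have hfrontne : (frontier G).Nonempty := by
    by_contra hne
    rw [not_nonempty_iff_eq_empty] at hne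
    have hclosed : IsClosed G := by
      have : closure G = G := by
        rw [closure_eq_self_union_frontier, hne, union_empty]
      exact isClosed_of_closure_subset this.subset
    have huniv : G = univ := IsClopen.eq_univ ⟨hclosed, hGopen⟩ hGne
    obtain ⟨r, hr⟩ := hGbd.subset_closedBall 0
    have hNpos : 0 < N := by omega
    set w : EuclideanSpace ℝ (Fin N) := (r + 1) • EuclideanSpace.single ⟨0, hNpos⟩ (1:ℝ) with hw
    have hwG : w ∈ G := huniv ▸ mem_univ w
    have hle := hr hwG
    rw [mem_closedBall, dist_zero_right] at hle
    have hnorm : ‖w‖ = |r + 1| := by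
      rw [hw, norm_smul, EuclideanSpace.norm_single]
      simp
    have hrpos : (0:ℝ) ≤ r := by
      have := hr (hGne.choose_spec)
      rw [mem_closedBall] at this
      exact le_trans dist_nonneg this
    rw [hnorm, abs_of_nonneg (by linarith)] at hle
    linarith
  -- the minimum of u on the boundary
  set m : ℝ := sInf (u '' frontier G) with hm
  clear_value m
  have hucont : ContinuousOn u (closure G) := hu2.continuousOn.mono hclG
  have huimg : IsCompact (u '' frontier G) :=
    hfrontcomp.image_of_continuousOn (hucont.mono hfrontsub)
  have hm_le : ∀ p ∈ frontier G, m ≤ u p := fun p hp => by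
    rw [hm]
    exact csInf_le huimg.bddBelow (mem_image_of_mem u hp)
  -- bound on the laplacian of f on the closure of G
  obtain ⟨CΔ₀, hCΔ₀⟩ := hGclcomp.exists_bound_of_continuousOn
    ((lapl_continuous hf2).continuousOn (s := closure G))
  set CΔ : ℝ := max CΔ₀ 1 with hCΔdef
  have hCΔpos : (0:ℝ) < CΔ := lt_of_lt_of_le one_pos (le_max_right _ _)
  have hCΔ : ∀ x ∈ closure G, |lapl f x| ≤ CΔ := fun x hx =>
    le_trans (hCΔ₀ x hx) (le_max_left _ _)
  clear_value CΔ
  have hCΔne : CΔ ≠ 0 := ne_of_gt hCΔpos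
  set a : ℝ := 1 / (2 * CΔ) with ha
  clear_value a
  have hapos : 0 < a := by rw [ha]; positivity
  -- the barrier estimate : a * (-f x) ≤ u x - m on closure G
  have hbarrier : ∀ x ∈ closure G, a * (-f x) ≤ u x - m := by
    set h : EuclideanSpace ℝ (Fin N) → ℝ := fun y => (u y - m) + a * f y with hhdef
    have hfC2 : ContDiffOn ℝ 2 f Ω := hf2.contDiffOn
    have humC2 : ContDiffOn ℝ 2 (fun y => u y - m) Ω := hu2.sub contDiffOn_const
    have hafC2 : ContDiffOn ℝ 2 (fun y => a * f y) Ω := contDiffOn_const.mul hfC2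
    have hhC2 : ContDiffOn ℝ 2 h Ω := humC2.add hafC2
    have hlaph : ∀ x ∈ G, lapl h x < 0 := by
      intro x hxG
      have hxΩ : x ∈ Ω := hGsubΩ hxG
      have e1 : lapl h x = lapl (fun y => u y - m) x + lapl (fun y => a * f y) x :=
        lapl_add hΩopen hxΩ humC2 hafC2
      have e2 : lapl (fun y => u y - m) x = lapl u x := lapl_sub_const u m
      have e3 : lapl (fun y => a * f y) x = a * lapl f x := lapl_const_mul hΩopen hxΩ hfC2 a
      have e4 : lapl u x = -1 := heq x hxΩ
      have e5 : |lapl f x| ≤ CΔ := hCΔ x (subset_closure hxG)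
      have e6 : a * CΔ = 1/2 := by
        rw [ha]
        field_simp
      have e7 : a * lapl f x ≤ 1/2 := by
        have h1 := le_abs_self (lapl f x)
        nlinarith
      rw [e1, e2, e3, e4]
      linarith
    have hmp := min_principle hΩopen hGopen hGbd hclG hhC2 hlaph
    intro x hx
    obtain ⟨y, hyf, hyx⟩ := hmp x hx
    have hfy : f y = 0 := by
      have := hfront ▸ hyf
      exact this
    have hy0 : (0:ℝ) ≤ h y := by
      rw [hhdef]
      simp only [hfy, mul_zero, add_zero]
      linarith [hm_le y hyf]
    have hx0 : (0:ℝ) ≤ h x := le_trans hy0 hyx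
    rw [hhdef] at hx0
    simp only at hx0
    nlinarith
  -- geometric constants
  obtain ⟨r1, hr1⟩ := hGbd.subset_closedBall 0
  set ρG : ℝ := max r1 1 with hρG
  have hρG1 : (1:ℝ) ≤ ρG := le_max_right _ _
  have hclGball : closure G ⊆ closedBall 0 ρG := by
    have : G ⊆ closedBall 0 ρG := hr1.trans (closedBall_subset_closedBall (le_max_left _ _))
    exact closure_minimal this isClosed_closedBall
  clear_value ρG
  have hρGpos : (0:ℝ) < ρG := by linarith
  set ρ₂ : ℝ := ρG + 2 with hρ₂
  clear_value ρ₂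
  have hρ₂1 : (1:ℝ) ≤ ρ₂ := by rw [hρ₂]; linarith
  -- bound on the second derivative of f on the big ball
  set F2 := fderiv ℝ (fderiv ℝ f) with hF2
  clear_value F2
  set M : ℝ := ‖F2 0‖ + (Kf : ℝ) * ρ₂ + 1 with hM
  clear_value M
  have hKf0 : (0:ℝ) ≤ (Kf : ℝ) := Kf.coe_nonneg
  have hMpos : 0 < M := by
    have h1 := norm_nonneg (F2 0)
    have h2 : (0:ℝ) ≤ (Kf : ℝ) * ρ₂ := mul_nonneg hKf0 (by linarith)
    rw [hM]
    linarith
  have hMne : M ≠ 0 := ne_of_gt hMpos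
  have hF2bound : ∀ y ∈ closedBall (0 : EuclideanSpace ℝ (Fin N)) ρ₂, ‖F2 y‖ ≤ M := by
    intro y hy
    have h1 : dist (F2 y) (F2 0) ≤ (Kf : ℝ) * dist y 0 ^ (α.toNNReal : ℝ) :=
      hfHol.dist_le y 0
    have hα' : (α.toNNReal : ℝ) = α := Real.coe_toNNReal α hα0.le
    rw [hα'] at h1
    have hy' : dist y (0 : EuclideanSpace ℝ (Fin N)) ≤ ρ₂ := mem_closedBall.1 hy
    have h2 : dist y (0 : EuclideanSpace ℝ (Fin N)) ^ α ≤ ρ₂ ^ α :=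
      Real.rpow_le_rpow dist_nonneg hy' hα0.le
    have h3 : ρ₂ ^ α ≤ ρ₂ ^ (1:ℝ) := Real.rpow_le_rpow_of_exponent_le hρ₂1 hα1
    rw [Real.rpow_one] at h3
    have h4 : ‖F2 y‖ - ‖F2 0‖ ≤ dist (F2 y) (F2 0) := by
      rw [dist_eq_norm (E := EuclideanSpace ℝ (Fin N) →L[ℝ] EuclideanSpace ℝ (Fin N) →L[ℝ] ℝ)]
      exact norm_sub_norm_le (F2 y) (F2 0)
    have h5 : (Kf : ℝ) * dist y 0 ^ α ≤ (Kf : ℝ) * ρ₂ := by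
      nlinarith [Real.rpow_nonneg (dist_nonneg : (0:ℝ) ≤ dist y 0) α]
    rw [hM]
    linarith
  -- the first derivative of f is M-Lipschitz on the big ball
  have hf1C1 : ContDiff ℝ 1 (fderiv ℝ f) := hf2.fderiv_right (by norm_num)
  have hLip : ∀ y ∈ closedBall (0 : EuclideanSpace ℝ (Fin N)) ρ₂,
      ∀ z ∈ closedBall (0 : EuclideanSpace ℝ (Fin N)) ρ₂,
      ‖fderiv ℝ f y - fderiv ℝ f z‖ ≤ M * ‖y - z‖ := by
    intro y hy z hz
    exact (convex_closedBall _ _).norm_image_sub_le_of_norm_fderiv_le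
      (fun w _ => (hf1C1.differentiable one_ne_zero).differentiableAt)
      (fun w hw => by rw [← hF2]; exact hF2bound w hw) hz hy
  -- minimum of the gradient norm on the frontier
  have hgradcont : ContinuousOn (fun p => ‖fderiv ℝ f p‖) (frontier G) :=
    ((hf1C1.continuous).norm).continuousOn
  obtain ⟨pstar, hpstar, hpstarmin⟩ := hfrontcomp.exists_isMinOn hfrontne hgradcont
  set c₀ : ℝ := ‖fderiv ℝ f pstar‖ with hc₀
  have hc₀pos : 0 < c₀ := by
    rw [hc₀, norm_pos_iff]
    exact hgrad pstar hpstar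
  have hc₀min : ∀ p ∈ frontier G, c₀ ≤ ‖fderiv ℝ f p‖ := fun p hp => by
    rw [hc₀]
    simpa using hpstarmin hp
  clear_value c₀
  have hc₀ne : c₀ ≠ 0 := ne_of_gt hc₀pos
  set r₀ : ℝ := c₀ / (2 * M) with hr₀
  clear_value r₀
  have hr₀pos : 0 < r₀ := by rw [hr₀]; positivity
  -- strip inclusion
  have hstrip : ∃ δ₀ > 0, ∀ x ∈ closure G, -δ₀ ≤ f x → infDist x (frontier G) < r₀ := by
    set A : Set (EuclideanSpace ℝ (Fin N)) :=
      {x ∈ closure G | r₀ ≤ infDist x (frontier G)} with hA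
    have hAcomp : IsCompact A := by
      apply hGclcomp.of_isClosed_subset
      · exact isClosed_closure.inter (isClosed_le continuous_const (continuous_infDist_pt _))
      · exact fun x hx => hx.1
    rcases A.eq_empty_or_nonempty with hAe | hAne
    · refine ⟨1, one_pos, fun x hx _ => ?_⟩
      by_contra hcon
      push_neg at hcon
      exact Set.eq_empty_iff_forall_notMem.1 hAe x ⟨hx, hcon⟩
    · have hfA : ContinuousOn f A := hf2.continuous.continuousOn
      obtain ⟨q, hqA, hqmax⟩ := hAcomp.exists_isMaxOn hAne hfA
      have hqG : q ∈ G := by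
        rcases (closure_eq_self_union_frontier G ▸ hqA.1) with h1 | h1
        · exact h1
        · exfalso
          have h0 : infDist q (frontier G) = 0 := infDist_zero_of_mem h1
          have h2 := hqA.2
          rw [h0] at h2
          exact absurd h2 (not_le.2 hr₀pos)
      have hfq : f q < 0 := by
        have := hGf ▸ hqG
        exact this
      refine ⟨-f q / 2, by linarith, fun x hx hfx => ?_⟩
      by_contra hcon
      push_neg at hcon
      have hxA : x ∈ A := ⟨hx, hcon⟩
      have := hqmax hxA
      simp only [mem_setOf_eq] at this
      linarith
  obtain ⟨δ₀, hδ₀pos, hδ₀⟩ := hstrip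
  set δ : ℝ := min δ₀ (min (c₀^2 / (16 * M)) (c₀ / 4)) with hδdef
  have hδpos : 0 < δ := by
    apply lt_min hδ₀pos
    apply lt_min <;> positivity
  have hδle₀ : δ ≤ δ₀ := min_le_left _ _
  have hδ1 : δ ≤ c₀ / 4 := le_trans (min_le_right _ _) (min_le_right _ _)
  have hδ2 : δ ≤ c₀^2 / (16 * M) := le_trans (min_le_right _ _) (min_le_left _ _)
  clear_value δ
  -- the flow estimate
  have hflow : ∀ x ∈ closure G, 0 < -f x → -f x ≤ δ →
      infDist x (frontier G) ≤ (4 / c₀) * (-f x) := by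
    intro x hx hv0 hvδ
    set v : ℝ := -f x with hvdef
    have hxball : x ∈ closedBall (0 : EuclideanSpace ℝ (Fin N)) ρ₂ :=
      closedBall_subset_closedBall (by rw [hρ₂]; linarith) (hclGball hx)
    have hnear : infDist x (frontier G) < r₀ := hδ₀ x hx (by linarith)
    obtain ⟨p, hpf, hpd⟩ := hfrontcomp.exists_infDist_eq_dist hfrontne x
    have hpball : p ∈ closedBall (0 : EuclideanSpace ℝ (Fin N)) ρ₂ :=
      closedBall_subset_closedBall (by rw [hρ₂]; linarith) (hclGball (hfrontsub hpf))
    have hxp : ‖x - p‖ ≤ r₀ := by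
      rw [← dist_eq_norm, ← hpd]
      exact hnear.le
    have hgradx : c₀ / 2 ≤ ‖fderiv ℝ f x‖ := by
      have h1 : ‖fderiv ℝ f x - fderiv ℝ f p‖ ≤ M * ‖x - p‖ := hLip x hxball p hpball
      have h2 : ‖fderiv ℝ f p‖ - ‖fderiv ℝ f x‖ ≤ ‖fderiv ℝ f x - fderiv ℝ f p‖ := by
        rw [norm_sub_rev]
        exact norm_sub_norm_le _ _
      have h3 : M * ‖x - p‖ ≤ M * r₀ := mul_le_mul_of_nonneg_left hxp hMpos.le
      have h4 : M * r₀ = c₀ / 2 := by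
        rw [hr₀]
        field_simp
      have h5 := hc₀min p hpf
      linarith
    have hDxpos : 0 < ‖fderiv ℝ f x‖ := lt_of_lt_of_le (by positivity) hgradx
    -- unit vector in the gradient direction
    set g0 : EuclideanSpace ℝ (Fin N) :=
      (InnerProductSpace.toDual ℝ (EuclideanSpace ℝ (Fin N))).symm (fderiv ℝ f x) with hg0
    have hg0norm : ‖g0‖ = ‖fderiv ℝ f x‖ := by
      rw [hg0]
      exact (InnerProductSpace.toDual ℝ (EuclideanSpace ℝ (Fin N))).symm.norm_map _
    have hg0ne : g0 ≠ 0 := by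
      intro hcon
      rw [hcon, norm_zero] at hg0norm
      rw [← hg0norm] at hDxpos
      linarith
    have hfdeq : fderiv ℝ f x = InnerProductSpace.toDual ℝ (EuclideanSpace ℝ (Fin N)) g0 := by
      rw [hg0]
      exact (LinearIsometryEquiv.apply_symm_apply _ _).symm
    clear_value g0
    set e : EuclideanSpace ℝ (Fin N) := ‖g0‖⁻¹ • g0 with he
    have henorm : ‖e‖ = 1 := by
      rw [he, norm_smul, norm_inv, norm_norm]
      field_simp [norm_ne_zero_iff.2 hg0ne]
    have hkey : fderiv ℝ f x e = ‖fderiv ℝ f x‖ := by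
      rw [hfdeq, InnerProductSpace.toDual_apply_apply, he, real_inner_smul_right,
        real_inner_self_eq_norm_mul_norm, hg0norm]
      field_simp [ne_of_gt hDxpos]
      rw [hfdeq]
    clear_value e
    -- the flow along the gradient direction
    set tbar : ℝ := 4 * v / c₀ with htbar
    clear_value tbar
    have htbarpos : 0 < tbar := by
      rw [htbar]
      exact div_pos (by linarith) hc₀pos
    have htbar1 : tbar ≤ 1 := by
      rw [htbar, div_le_one hc₀pos]
      linarith
    have htbarM : tbar ≤ c₀ / (4 * M) := by
      rw [htbar, div_le_div_iff₀ hc₀pos (by positivity)]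
      have hvle : v ≤ c₀^2 / (16 * M) := le_trans hvδ hδ2
      have h16 : v * (16 * M) ≤ c₀^2 := (le_div_iff₀ (by positivity)).1 hvle
      nlinarith
    have hxnorm : ‖x‖ ≤ ρG := by
      have := hclGball hx
      rwa [mem_closedBall, dist_zero_right] at this
    have hmemball : ∀ t ∈ Icc (0:ℝ) tbar,
        x + t • e ∈ closedBall (0 : EuclideanSpace ℝ (Fin N)) ρ₂ := by
      intro t ⟨ht0, ht1⟩
      rw [mem_closedBall, dist_zero_right]
      have h1 : ‖t • e‖ = t := by
        rw [norm_smul, henorm, Real.norm_eq_abs, abs_of_nonneg ht0, mul_one]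
      calc ‖x + t • e‖ ≤ ‖x‖ + ‖t • e‖ := norm_add_le _ _
        _ ≤ ρG + 1 := by rw [h1]; linarith
        _ ≤ ρ₂ := by rw [hρ₂]; linarith
    set g : ℝ → ℝ := fun t => f (x + t • e) with hgdef
    clear_value g
    have hlineg : ∀ t : ℝ, HasDerivAt (fun s : ℝ => x + s • e) e t := by
      intro t
      simpa using ((hasDerivAt_id t).smul_const e).const_add x
    have hgd : ∀ t : ℝ, HasDerivAt g (fderiv ℝ f (x + t • e) e) t := by
      intro t
      rw [hgdef]
      have hdf : DifferentiableAt ℝ f (x + t • e) :=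
        (hf2.differentiable (by norm_num)).differentiableAt
      exact hdf.hasFDerivAt.comp_hasDerivAt t (hlineg t)
    have hderivlb : ∀ t ∈ Icc (0:ℝ) tbar, c₀/4 ≤ fderiv ℝ f (x + t • e) e := by
      intro t ⟨ht0, ht1⟩
      have hmem := hmemball t ⟨ht0, ht1⟩
      have hlip := hLip (x + t • e) hmem x hxball
      have hnrm : ‖x + t • e - x‖ = t := by
        rw [add_sub_cancel_left, norm_smul, henorm, Real.norm_eq_abs, abs_of_nonneg ht0, mul_one]
      rw [hnrm] at hlip
      have happly : |(fderiv ℝ f (x + t • e) - fderiv ℝ f x) e|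
          ≤ ‖fderiv ℝ f (x + t • e) - fderiv ℝ f x‖ := by
        have h1 := (fderiv ℝ f (x + t • e) - fderiv ℝ f x).le_opNorm e
        rw [henorm, mul_one] at h1
        exact (Real.norm_eq_abs _ ▸ h1)
      have hsub : (fderiv ℝ f (x + t • e) - fderiv ℝ f x) e
          = fderiv ℝ f (x + t • e) e - fderiv ℝ f x e :=
        ContinuousLinearMap.sub_apply _ _ _
      have hMt : M * t ≤ c₀/4 := by
        have h1 : t ≤ c₀ / (4 * M) := le_trans ht1 htbarM
        have h2 : M * t ≤ M * (c₀ / (4 * M)) := mul_le_mul_of_nonneg_left h1 hMpos.le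
        have h3 : M * (c₀ / (4 * M)) = c₀ / 4 := by
          field_simp
        linarith
      rw [hsub] at happly
      have habs := (abs_le.1 happly).1
      rw [hkey] at habs
      linarith
    have hg0val : g 0 = -v := by
      rw [hgdef, hvdef]
      simp
    have hmono : MonotoneOn (fun t => g t - (c₀/4) * t) (Icc 0 tbar) := by
      apply monotoneOn_of_deriv_nonneg (convex_Icc _ _)
      · have hc : Continuous g := by
          rw [hgdef]
          exact hf2.continuous.comp (continuous_const.add (continuous_id.smul continuous_const))
        exact (hc.sub (continuous_const.mul continuous_id)).continuousOn
      · intro t ht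
        exact ((hgd t).sub ((hasDerivAt_id t).const_mul (c₀/4))).differentiableAt.differentiableWithinAt
      · intro t ht
        rw [interior_Icc] at ht
        have hd : HasDerivAt (fun s => g s - (c₀/4) * s)
            (fderiv ℝ f (x + t • e) e - c₀/4) t := by
          have := (hgd t).sub ((hasDerivAt_id t).const_mul (c₀/4)); rw [mul_one] at this; exact this
        rw [hd.deriv]
        have := hderivlb t ⟨ht.1.le, ht.2.le⟩
        linarith
    have hvtbar : (c₀/4) * tbar = v := by
      rw [htbar]
      field_simp
    have hgtbar : 0 ≤ g tbar := by
      have h1 := hmono (left_mem_Icc.2 htbarpos.le) (right_mem_Icc.2 htbarpos.le) htbarpos.le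
      simp only [mul_zero, sub_zero] at h1
      rw [hg0val] at h1
      linarith
    have hgcont : ContinuousOn g (Icc 0 tbar) :=
      fun t _ => ((hgd t).continuousAt).continuousWithinAt
    have hivt : (0:ℝ) ∈ Icc (g 0) (g tbar) := by
      rw [hg0val]
      exact ⟨by linarith, hgtbar⟩
    obtain ⟨t₀, ht₀mem, ht₀⟩ := intermediate_value_Icc htbarpos.le hgcont hivt
    have hy0front : x + t₀ • e ∈ frontier G := by
      rw [hfront]
      show f (x + t₀ • e) = 0
      have : g t₀ = 0 := ht₀
      rw [hgdef] at this
      exact this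
    have hinf : infDist x (frontier G) ≤ dist x (x + t₀ • e) :=
      infDist_le_dist_of_mem hy0front
    have hdisteq : dist x (x + t₀ • e) = t₀ := by
      rw [dist_eq_norm]
      have hx0 : x - (x + t₀ • e) = -(t₀ • e) := by abel
      rw [hx0, norm_neg, norm_smul, henorm, Real.norm_eq_abs, abs_of_nonneg ht₀mem.1, mul_one]
    have htfin : infDist x (frontier G) ≤ tbar := by
      rw [hdisteq] at hinf
      exact le_trans hinf ht₀mem.2
    have : tbar = (4 / c₀) * v := by
      rw [htbar]
      ring
    rw [this, hvdef] at htfin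
    exact htfin
  -- final assembly
  set DG : ℝ := 2 * ρG + 1 with hDGdef
  clear_value DG
  have hDGpos : 0 < DG := by rw [hDGdef]; linarith
  have hDG : ∀ x ∈ closure G, infDist x (frontier G) ≤ DG := by
    intro x hx
    have h1 : infDist x (frontier G) ≤ dist x pstar := infDist_le_dist_of_mem hpstar
    have hxn : ‖x‖ ≤ ρG := by
      have := hclGball hx
      rwa [mem_closedBall, dist_zero_right] at this
    have hpn : ‖pstar‖ ≤ ρG := by
      have := hclGball (hfrontsub hpstar)
      rwa [mem_closedBall, dist_zero_right] at this
    have h2 : dist x pstar ≤ ‖x‖ + ‖pstar‖ := by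
      rw [dist_eq_norm]
      exact norm_sub_le _ _
    rw [hDGdef]
    linarith
  set K : ℝ := min (a * c₀ / 4) (a * δ / DG) with hKdef
  have hK1 : K ≤ a * c₀ / 4 := min_le_left _ _
  have hK2 : K ≤ a * δ / DG := min_le_right _ _
  clear_value K
  have hKpos : 0 < K := by
    rw [hKdef]
    refine lt_min ?_ (div_pos (mul_pos hapos hδpos) hDGpos)
    have := mul_pos hapos hc₀pos
    linarith
  refine ⟨K, hKpos, ?_⟩
  intro x hx
  have hd0 : 0 ≤ infDist x (frontier G) := infDist_nonneg
  have hbar := hbarrier x hx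
  by_cases hcase : -f x ≤ δ
  · by_cases hz : f x = 0
    · have hxf : x ∈ frontier G := by
        rw [hfront]
        exact hz
      have hdz : infDist x (frontier G) = 0 := infDist_zero_of_mem hxf
      rw [hdz, mul_zero, zero_add]
      exact hm_le x hxf
    · have hfxneg : 0 < -f x := by
        have hfx0 : f x ≤ 0 := by
          rcases (closure_eq_self_union_frontier G ▸ hx) with h1 | h1
          · have h2 : f x < 0 := by
              have := hGf ▸ h1
              exact this
            linarith
          · have h2 : f x = 0 := by
              have := hfront ▸ h1
              exact this
            linarith [h2.le]
        rcases lt_or_eq_of_le hfx0 with h1 | h1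
        · linarith
        · exact absurd h1 hz
      have hflowx := hflow x hx hfxneg hcase
      have hKd : K * infDist x (frontier G) ≤ a * (-f x) := by
        have hs1 : K * infDist x (frontier G) ≤ (a * c₀ / 4) * infDist x (frontier G) :=
          mul_le_mul_of_nonneg_right hK1 hd0
        have hs2 : (a * c₀ / 4) * infDist x (frontier G)
            ≤ (a * c₀ / 4) * ((4 / c₀) * (-f x)) := by
          apply mul_le_mul_of_nonneg_left hflowx
          have := mul_pos hapos hc₀pos
          linarith
        have hs3 : (a * c₀ / 4) * ((4 / c₀) * (-f x)) = a * (-f x) := by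
          field_simp
        linarith
      linarith
  · push_neg at hcase
    have h1 : K * infDist x (frontier G) ≤ (a * δ / DG) * DG := by
      have hs1 : K * infDist x (frontier G) ≤ (a * δ / DG) * infDist x (frontier G) :=
        mul_le_mul_of_nonneg_right hK2 hd0
      have hs2 : (a * δ / DG) * infDist x (frontier G) ≤ (a * δ / DG) * DG := by
        apply mul_le_mul_of_nonneg_left (hDG x hx)
        positivity
      linarith
    have h2 : (a * δ / DG) * DG = a * δ := div_mul_cancel₀ _ (ne_of_gt hDGpos)
    have h3 : a * δ ≤ a * (-f x) := by nlinarith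
    linarith
end

section
/- Let G be a bounded domain in ℝ^N, let R > 0 and set Ω = G + B_R. Then for every unit vector ω ∈ ℝ^N and every λ ∈ ℝ: if the reflected cap G^λ is contained in G, then the reflected cap Ω^λ is contained in Ω. -/
open Metric Set
open scoped Pointwise NNReal

/-- if the reflected cap of `G` is contained in `G`, then the reflected
cap of the Minkowski sum `Ω = G + B_R` is contained in `Ω`. -/
theorem reflCap_minkowski (N : ℕ)
    (G : Set (EuclideanSpace ℝ (Fin N)))
    (hGopen : IsOpen G) (hGconn : IsConnected G) (hGbd : Bornology.IsBounded G)
    (R : ℝ) (hR : 0 < R)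
    (Ω : Set (EuclideanSpace ℝ (Fin N))) (hΩ : Ω = G + ball (0 : EuclideanSpace ℝ (Fin N)) R)
    (ω : EuclideanSpace ℝ (Fin N)) (hω : ‖ω‖ = 1) (lam : ℝ)
    (h : reflCap G ω lam ⊆ G) :
    reflCap Ω ω lam ⊆ Ω := by
  have hω2 : (inner ℝ ω ω : ℝ) = 1 := by
    rw [real_inner_self_eq_norm_sq, hω]; norm_num
  have hir : ∀ z : EuclideanSpace ℝ (Fin N),
      (inner ℝ (reflPt ω lam z) ω : ℝ) = inner ℝ z ω - 2 * ((inner ℝ z ω : ℝ) - lam) := by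
    intro z
    unfold reflPt
    rw [inner_sub_left, real_inner_smul_left, hω2, mul_one]
  have hinv : ∀ z : EuclideanSpace ℝ (Fin N), reflPt ω lam (reflPt ω lam z) = z := by
    intro z
    have hs : (2 * ((inner ℝ (reflPt ω lam z) ω : ℝ) - lam))
        = -(2 * ((inner ℝ z ω : ℝ) - lam)) := by rw [hir z]; ring
    conv_lhs => rw [reflPt, hs, neg_smul, sub_neg_eq_add]
    unfold reflPt
    abel
  intro x hx
  obtain ⟨hyΩ, hylam⟩ := hx
  set y := reflPt ω lam x with hy
  rw [hΩ] at hyΩ ⊢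
  obtain ⟨g, hg, b, hb, hgb⟩ := Set.mem_add.mp hyΩ
  rw [mem_ball_zero_iff] at hb
  have hxy : x = y - (2 * ((inner ℝ y ω : ℝ) - lam)) • ω := by
    conv_lhs => rw [← hinv x]
    rw [reflPt]
  set t : ℝ := (inner ℝ y ω : ℝ) - lam with ht
  have htpos : 0 < t := by simp only [ht]; linarith [hylam]
  have hib : (inner ℝ b ω : ℝ) = (inner ℝ y ω : ℝ) - (inner ℝ g ω : ℝ) := by
    rw [← hgb, inner_add_left]; ring
  by_cases hcase : (inner ℝ g ω : ℝ) ≤ lam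
  · -- x = g + (b - 2t ω), with ‖b - 2tω‖ ≤ ‖b‖ < R
    have hbω : t ≤ (inner ℝ b ω : ℝ) := by rw [hib]; simp only [ht]; linarith
    refine Set.mem_add.mpr ⟨g, hg, b - (2 * t) • ω, ?_, ?_⟩
    · rw [mem_ball_zero_iff]
      have hsq : ‖b - (2 * t) • ω‖ ^ 2 ≤ ‖b‖ ^ 2 := by
        rw [norm_sub_sq_real, real_inner_smul_right, norm_smul, hω]
        have h2t : |(2 : ℝ) * t| = 2 * t := abs_of_pos (by linarith)
        rw [Real.norm_eq_abs, h2t]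
        nlinarith
      nlinarith [norm_nonneg (b - (2 * t) • ω), norm_nonneg b]
    · rw [hxy, ← hgb]
      abel
  · -- x = reflPt g + (b - 2⟨b,ω⟩ω)
    push_neg at hcase
    have hg' : reflPt ω lam g ∈ G := by
      apply h
      exact ⟨by rw [hinv g]; exact hg, by rw [hinv g]; exact hcase⟩
    refine Set.mem_add.mpr ⟨reflPt ω lam g, hg',
      b - (2 * (inner ℝ b ω : ℝ)) • ω, ?_, ?_⟩
    · rw [mem_ball_zero_iff]
      have hsq : ‖b - (2 * (inner ℝ b ω : ℝ)) • ω‖ ^ 2 = ‖b‖ ^ 2 := by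
        rw [norm_sub_sq_real, real_inner_smul_right, norm_smul, hω]
        rw [Real.norm_eq_abs, mul_one, sq_abs]
        ring
      nlinarith [norm_nonneg (b - (2 * (inner ℝ b ω : ℝ)) • ω), norm_nonneg b]
    · rw [hxy, ht, ← hgb]
      unfold reflPt
      rw [inner_add_left]
      module
end
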